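/- arXiv:2403.17557 — 15 statements merged into one kernel-verified Lean document; each statement's English description precedes it below -/
import Mathlib

section
/- Let 0 ≤ m < M and let f : [0,∞) → ℝ be a superquadratic function. Define β(t) = ((t−m)/(M−m))·f(M−t) + ((M−t)/(M−m))·f(t−m) for t ∈ [m,M]. Then for all x, y ∈ [m,M] and every λ ∈ [0,1], f(m + M − (λx + (1−λ)y)) + 2(λβ(x) + (1−λ)β(y)) ≤ f(m) + f(M) − (λf(x) + (1−λ)f(y)) − (λ·f((1−λ)|x−y|) + (1−λ)·f(λ|x−y|)). -/
/-- A function `f : [0,∞) → ℝ` is superquadratic if for every `x ≥ 0` there exists a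
constant `C ∈ ℝ` such that `f y ≥ f x + C * (y - x) + f |y - x|` for all `y ≥ 0`. -/
def Superquadratic (f : ℝ → ℝ) : Prop :=
  ∀ x : ℝ, 0 ≤ x → ∃ C : ℝ, ∀ y : ℝ, 0 ≤ y → f x + C * (y - x) + f (|y - x|) ≤ f y

lemma sq_jensen (f : ℝ → ℝ) (hf : Superquadratic f) (a b : ℝ) (ha : 0 ≤ a) (hb : 0 ≤ b)
    (l : ℝ) (hl0 : 0 ≤ l) (hl1 : l ≤ 1) :
    f (l * a + (1 - l) * b) + l * f ((1 - l) * |a - b|) + (1 - l) * f (l * |a - b|) ≤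
      l * f a + (1 - l) * f b := by
  have hs : 0 ≤ l * a + (1 - l) * b :=
    add_nonneg (mul_nonneg hl0 ha) (mul_nonneg (by linarith) hb)
  obtain ⟨C, hC⟩ := hf _ hs
  have h1 := hC a ha
  have h2 := hC b hb
  have e1 : |a - (l * a + (1 - l) * b)| = (1 - l) * |a - b| := by
    have : a - (l * a + (1 - l) * b) = (1 - l) * (a - b) := by ring
    rw [this, abs_mul, abs_of_nonneg (by linarith : (0:ℝ) ≤ 1 - l)]
  have e2 : |b - (l * a + (1 - l) * b)| = l * |a - b| := by
    have : b - (l * a + (1 - l) * b) = l * (b - a) := by ring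
    rw [this, abs_mul, abs_of_nonneg hl0, abs_sub_comm]
  rw [e1] at h1
  rw [e2] at h2
  nlinarith [mul_le_mul_of_nonneg_left h1 hl0,
    mul_le_mul_of_nonneg_left h2 (by linarith : (0:ℝ) ≤ 1 - l)]

lemma sq_key (m M : ℝ) (hm : 0 ≤ m) (hmM : m < M)
    (f : ℝ → ℝ) (hf : Superquadratic f) (t : ℝ) (ht : t ∈ Set.Icc m M) :
    f (m + M - t) + 2 * ((t - m) / (M - m) * f (M - t) + (M - t) / (M - m) * f (t - m)) ≤
      f m + f M - f t := by
  obtain ⟨htm, htM⟩ := ht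
  have hMm : M - m ≠ 0 := by linarith
  set p : ℝ := (M - t) / (M - m) with hp
  have hp0 : 0 ≤ p := div_nonneg (by linarith) (by linarith)
  have hp1 : p ≤ 1 := by
    rw [hp, div_le_one (by linarith)]; linarith
  have e2 : p * (M - m) = M - t := by rw [hp]; field_simp
  have e1 : (1 - p) * (M - m) = t - m := by rw [sub_mul, one_mul, e2]; ring
  have hq : (t - m) / (M - m) = 1 - p := by
    rw [div_eq_iff hMm, ← e1]
  have eab : |m - M| = M - m := by rw [abs_of_nonpos (by linarith)]; ring
  have hpt : p * m + (1 - p) * M = t := by linarith [e2]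
  have hqt : (1 - p) * m + (1 - (1 - p)) * M = m + M - t := by nlinarith [e2]
  have h1 := sq_jensen f hf m M hm (by linarith) p hp0 hp1
  rw [hpt, eab, e1, e2] at h1
  have h2 := sq_jensen f hf m M hm (by linarith) (1 - p) (by linarith) (by linarith)
  rw [hqt, eab] at h2
  have hpp : 1 - (1 - p) = p := by ring
  rw [hpp, e1, e2] at h2
  rw [hq]
  linarith

theorem mercer_lemma_superquadratic
    (m M : ℝ) (hm : 0 ≤ m) (hmM : m < M)
    (f : ℝ → ℝ) (hf : Superquadratic f)
    (β : ℝ → ℝ)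
    (hβ : ∀ t ∈ Set.Icc m M,
      β t = (t - m) / (M - m) * f (M - t) + (M - t) / (M - m) * f (t - m))
    (x y : ℝ) (hx : x ∈ Set.Icc m M) (hy : y ∈ Set.Icc m M)
    (lam : ℝ) (hlam : lam ∈ Set.Icc (0 : ℝ) 1) :
    f (m + M - (lam * x + (1 - lam) * y)) + 2 * (lam * β x + (1 - lam) * β y) ≤
      f m + f M - (lam * f x + (1 - lam) * f y) -
        (lam * f ((1 - lam) * |x - y|) + (1 - lam) * f (lam * |x - y|)) := by
  obtain ⟨hl0, hl1⟩ := hlam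
  rw [hβ x hx, hβ y hy]
  have keyx := sq_key m M hm hmM f hf x hx
  have keyy := sq_key m M hm hmM f hf y hy
  have hax : 0 ≤ m + M - x := by have := hx.2; linarith
  have hay : 0 ≤ m + M - y := by have := hy.2; linarith
  have hJ := sq_jensen f hf (m + M - x) (m + M - y) hax hay lam hl0 hl1
  have ept : lam * (m + M - x) + (1 - lam) * (m + M - y) =
      m + M - (lam * x + (1 - lam) * y) := by ring
  have eab : |m + M - x - (m + M - y)| = |x - y| := by
    have : m + M - x - (m + M - y) = y - x := by ring
    rw [this, abs_sub_comm]
  rw [ept, eab] at hJ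
  nlinarith [mul_le_mul_of_nonneg_left keyx hl0,
    mul_le_mul_of_nonneg_left keyy (by linarith : (0:ℝ) ≤ 1 - lam), hJ]
end

section
/- Let 0 ≤ m < M and let f : [0,∞) → ℝ be a superquadratic function, and let β(t) = ((t−m)/(M−m))·f(M−t) + ((M−t)/(M−m))·f(t−m). Then for all x, y ∈ [m,M] with x < y: f(m + M − (x+y)/2) + 2∫₀^{1/2} f(u·|x−y|) du ≤ f(m) + f(M) − (1/(y−x))·∫ₓ^y (f(u) + 2β(u)) du ≤ f(m) + f(M) − f((x+y)/2) − (2/(y−x))·∫ₓ^y β(u) du − 2∫₀^{1/2} f(u·|x−y|) du. -/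
/-- Left Hermite–Hadamard inequality for superquadratic functions. -/
lemma hh_left_superquadratic (f : ℝ → ℝ) (hf : Superquadratic f) (hfc : Continuous f)
    (a b : ℝ) (ha : 0 ≤ a) (hab : a < b) :
    f ((a + b) / 2) + 2 * (∫ u in (0:ℝ)..(1/2), f (u * (b - a))) ≤
      (1 / (b - a)) * ∫ t in a..b, f t := by
  have hb : 0 ≤ b := ha.trans hab.le
  have hba : 0 < b - a := by linarith
  set c : ℝ := (a + b) / 2 with hcdef
  have hc0 : 0 ≤ c := by rw [hcdef]; linarith
  have hac : a ≤ c := by rw [hcdef]; linarith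
  have hcb : c ≤ b := by rw [hcdef]; linarith
  obtain ⟨C, hC⟩ := hf c hc0
  have habscont : Continuous fun t : ℝ => f |t - c| :=
    hfc.comp ((continuous_id.sub continuous_const).abs)
  have hgcont : Continuous fun t : ℝ => f c + C * (t - c) + f |t - c| :=
    (continuous_const.add (continuous_const.mul (continuous_id.sub continuous_const))).add
      habscont
  have hmono : (∫ t in a..b, (f c + C * (t - c) + f |t - c|)) ≤ ∫ t in a..b, f t :=
    intervalIntegral.integral_mono_on hab.le (hgcont.intervalIntegrable _ _)
      (hfc.intervalIntegrable _ _) (fun t ht => hC t (ha.trans ht.1))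
  have i1 : (∫ t in a..c, f |t - c|) = ∫ s in (0:ℝ)..((b - a)/2), f s := by
    have e : ∀ t ∈ Set.uIcc a c, f |t - c| = f (c - t) := by
      intro t ht
      rw [Set.uIcc_of_le hac] at ht
      rw [abs_of_nonpos (by linarith [ht.2] : t - c ≤ 0), neg_sub]
    rw [intervalIntegral.integral_congr e, intervalIntegral.integral_comp_sub_left f c,
      sub_self, show c - a = (b - a)/2 from by rw [hcdef]; ring]
  have i2 : (∫ t in c..b, f |t - c|) = ∫ s in (0:ℝ)..((b - a)/2), f s := by
    have e : ∀ t ∈ Set.uIcc c b, f |t - c| = f (t - c) := by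
      intro t ht
      rw [Set.uIcc_of_le hcb] at ht
      rw [abs_of_nonneg (by linarith [ht.1] : (0:ℝ) ≤ t - c)]
    rw [intervalIntegral.integral_congr e, intervalIntegral.integral_comp_sub_right f c,
      sub_self, show b - c = (b - a)/2 from by rw [hcdef]; ring]
  have iabs : (∫ t in a..b, f |t - c|) = 2 * ∫ s in (0:ℝ)..((b - a)/2), f s := by
    rw [← intervalIntegral.integral_add_adjacent_intervals
      (habscont.intervalIntegrable a c) (habscont.intervalIntegrable c b), i1, i2]
    ring
  have ilin : (∫ t in a..b, (f c + C * (t - c))) = (b - a) * f c := by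
    have e : (∫ t in a..b, (f c + C * (t - c))) = ∫ t in a..b, (C * t + (f c - C * c)) :=
      intervalIntegral.integral_congr (fun t _ => by ring)
    rw [e, intervalIntegral.integral_add
        ((by fun_prop : Continuous fun t : ℝ => C * t).intervalIntegrable _ _)
        intervalIntegrable_const,
      intervalIntegral.integral_const_mul, integral_id, intervalIntegral.integral_const,
      smul_eq_mul, hcdef]
    ring
  have itotal : (∫ t in a..b, (f c + C * (t - c) + f |t - c|)) =
      (b - a) * f c + 2 * ∫ s in (0:ℝ)..((b - a)/2), f s := by
    rw [intervalIntegral.integral_add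
        ((by fun_prop : Continuous fun t : ℝ => f c + C * (t - c)).intervalIntegrable _ _)
        ((by fun_prop : Continuous fun t : ℝ => f |t - c|).intervalIntegrable _ _), ilin, iabs]
  have hsubst : (∫ u in (0:ℝ)..(1/2), f (u * (b - a))) =
      (b - a)⁻¹ * ∫ s in (0:ℝ)..((b - a)/2), f s := by
    rw [intervalIntegral.integral_comp_mul_right f hba.ne',
      show (0:ℝ) * (b - a) = 0 from by ring,
      show (1/2 : ℝ) * (b - a) = (b - a)/2 from by ring, smul_eq_mul]
  have key : (b - a) * f c + 2 * (∫ s in (0:ℝ)..((b - a)/2), f s) ≤ ∫ t in a..b, f t :=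
    itotal ▸ hmono
  rw [hsubst]
  have hid : f c + 2 * ((b - a)⁻¹ * ∫ s in (0:ℝ)..((b - a)/2), f s) =
      (1/(b - a)) * ((b - a) * f c + 2 * ∫ s in (0:ℝ)..((b - a)/2), f s) := by
    field_simp
  rw [hid]
  exact mul_le_mul_of_nonneg_left key (one_div_nonneg.mpr hba.le)

/-- Pointwise Mercer-type inequality for superquadratic functions. -/
lemma mercer_pt_superquadratic (f : ℝ → ℝ) (hf : Superquadratic f) (m M : ℝ)
    (hm : 0 ≤ m) (hmM : m < M) (t : ℝ) (ht : t ∈ Set.Icc m M) :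
    f (m + M - t) + f t +
      2 * ((t - m)/(M - m) * f (M - t) + (M - t)/(M - m) * f (t - m)) ≤ f m + f M := by
  obtain ⟨ht1, ht2⟩ := ht
  have hM0 : 0 ≤ M := by linarith
  have ht0 : 0 ≤ t := by linarith
  have hs0 : 0 ≤ m + M - t := by linarith
  obtain ⟨C1, h1⟩ := hf t ht0
  obtain ⟨C2, h2⟩ := hf (m + M - t) hs0
  have a1 := h1 m hm
  have a2 := h1 M hM0
  have b1 := h2 m hm
  have b2 := h2 M hM0
  rw [show |m - t| = t - m from by
    rw [abs_sub_comm]; exact abs_of_nonneg (by linarith)] at a1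
  rw [abs_of_nonneg (show (0:ℝ) ≤ M - t by linarith)] at a2
  rw [show m - (m + M - t) = t - M from by ring,
    show |t - M| = M - t from by
      rw [abs_sub_comm]; exact abs_of_nonneg (by linarith)] at b1
  rw [show M - (m + M - t) = t - m from by ring,
    abs_of_nonneg (show (0:ℝ) ≤ t - m by linarith)] at b2
  have k1 := mul_le_mul_of_nonneg_left a1 (show (0:ℝ) ≤ M - t by linarith)
  have k2 := mul_le_mul_of_nonneg_left a2 (show (0:ℝ) ≤ t - m by linarith)
  have k3 := mul_le_mul_of_nonneg_left b1 (show (0:ℝ) ≤ t - m by linarith)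
  have k4 := mul_le_mul_of_nonneg_left b2 (show (0:ℝ) ≤ M - t by linarith)
  have key : (M - m) * (f (m + M - t) + f t) +
      2 * ((t - m) * f (M - t) + (M - t) * f (t - m)) ≤ (M - m) * (f m + f M) := by
    nlinarith [k1, k2, k3, k4]
  have hMm : (0:ℝ) < M - m := by linarith
  have hfrac : (t - m)/(M - m) * f (M - t) + (M - t)/(M - m) * f (t - m)
      = ((t - m) * f (M - t) + (M - t) * f (t - m)) / (M - m) := by ring
  rw [hfrac]
  have hE : ((t - m) * f (M - t) + (M - t) * f (t - m)) / (M - m) ≤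
      (f m + f M - f (m + M - t) - f t) / 2 := by
    rw [div_le_div_iff₀ hMm (by norm_num : (0:ℝ) < 2)]
    nlinarith [key]
  linarith [hE]

theorem mercer_hermite_hadamard_superquadratic_second
    (m M : ℝ) (hm : 0 ≤ m) (hmM : m < M)
    (f : ℝ → ℝ) (hf : Superquadratic f) (hf_cont : Continuous f)
    (β : ℝ → ℝ)
    (hβ : ∀ t ∈ Set.Icc m M,
      β t = (t - m) / (M - m) * f (M - t) + (M - t) / (M - m) * f (t - m))
    (x y : ℝ) (hx : x ∈ Set.Icc m M) (hy : y ∈ Set.Icc m M) (hxy : x < y) :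
    f (m + M - (x + y) / 2) + 2 * (∫ u in (0 : ℝ)..(1 / 2), f (u * |x - y|)) ≤
        f m + f M - (1 / (y - x)) * (∫ u in x..y, (f u + 2 * β u)) ∧
      f m + f M - (1 / (y - x)) * (∫ u in x..y, (f u + 2 * β u)) ≤
        f m + f M - f ((x + y) / 2) - (2 / (y - x)) * (∫ u in x..y, β u) -
          2 * (∫ u in (0 : ℝ)..(1 / 2), f (u * |x - y|)) := by
  obtain ⟨hxm, hxM⟩ := hx
  obtain ⟨hym, hyM⟩ := hy
  have hyx : 0 < y - x := by linarith
  have hx0 : 0 ≤ x := by linarith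
  have habs : |x - y| = y - x := by rw [abs_sub_comm]; exact abs_of_pos hyx
  simp only [habs]
  set g : ℝ → ℝ := fun t => (t - m)/(M - m) * f (M - t) + (M - t)/(M - m) * f (t - m)
    with hgdef
  have hgt : ∀ t, g t = (t - m)/(M - m) * f (M - t) + (M - t)/(M - m) * f (t - m) :=
    fun t => rfl
  have hg_cont : Continuous g := by
    apply Continuous.add
    · exact ((continuous_id.sub continuous_const).div_const _).mul
        (hf_cont.comp (continuous_const.sub continuous_id))
    · exact ((continuous_const.sub continuous_id).div_const _).mul
        (hf_cont.comp (continuous_id.sub continuous_const))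
  have huIcc : Set.uIcc x y ⊆ Set.Icc m M := by
    rw [Set.uIcc_of_le hxy.le]; exact Set.Icc_subset_Icc hxm hyM
  have hβeq : ∀ t ∈ Set.uIcc x y, β t = g t := fun t ht => hβ t (huIcc ht)
  have hIβ : (∫ t in x..y, β t) = ∫ t in x..y, g t := intervalIntegral.integral_congr hβeq
  have hIcomb : (∫ t in x..y, (f t + 2 * β t)) =
      (∫ t in x..y, f t) + 2 * ∫ t in x..y, g t := by
    have e : (∫ t in x..y, (f t + 2 * β t)) = ∫ t in x..y, (f t + 2 * g t) :=
      intervalIntegral.integral_congr (fun t ht => by rw [hβeq t ht])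
    rw [e, intervalIntegral.integral_add (hf_cont.intervalIntegrable _ _)
      ((by fun_prop : Continuous fun t : ℝ => 2 * g t).intervalIntegrable _ _),
      intervalIntegral.integral_const_mul]
  have hh2 := hh_left_superquadratic f hf hf_cont x y hx0 hxy
  have ha'0 : 0 ≤ m + M - y := by linarith
  have hab' : m + M - y < m + M - x := by linarith
  have hh1 := hh_left_superquadratic f hf hf_cont (m + M - y) (m + M - x) ha'0 hab'
  rw [show ((m + M - y) + (m + M - x)) / 2 = m + M - (x + y)/2 from by ring,
    show (m + M - x) - (m + M - y) = y - x from by ring] at hh1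
  have hrefl : (∫ t in x..y, f (m + M - t)) = ∫ s in (m + M - y)..(m + M - x), f s :=
    intervalIntegral.integral_comp_sub_left f (m + M)
  have hptmono : (∫ t in x..y, f (m + M - t)) ≤
      ∫ t in x..y, (f m + f M - f t - 2 * g t) := by
    apply intervalIntegral.integral_mono_on hxy.le
      ((by fun_prop : Continuous fun t : ℝ => f (m + M - t)).intervalIntegrable _ _)
      ((by fun_prop : Continuous fun t : ℝ => f m + f M - f t - 2 * g t).intervalIntegrable _ _)
    intro t ht
    show f (m + M - t) ≤ f m + f M - f t - 2 * g t
    have htmM : t ∈ Set.Icc m M := ⟨by linarith [ht.1], by linarith [ht.2]⟩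
    have hmp := mercer_pt_superquadratic f hf m M hm hmM t htmM
    rw [hgt t]
    linarith [hmp]
  have hrhs : (∫ t in x..y, (f m + f M - f t - 2 * g t)) =
      (y - x) * (f m + f M) - (∫ t in x..y, f t) - 2 * ∫ t in x..y, g t := by
    rw [intervalIntegral.integral_sub
        ((intervalIntegrable_const).sub (hf_cont.intervalIntegrable _ _))
        ((by fun_prop : Continuous fun t : ℝ => 2 * g t).intervalIntegrable _ _),
      intervalIntegral.integral_sub intervalIntegrable_const (hf_cont.intervalIntegrable _ _),
      intervalIntegral.integral_const, intervalIntegral.integral_const_mul, smul_eq_mul]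
  set If := ∫ t in x..y, f t with hIfdef
  set Ig := ∫ t in x..y, g t with hIgdef
  set S := ∫ u in (0:ℝ)..(1/2), f (u * (y - x)) with hSdef
  constructor
  · have chain : f (m + M - (x + y)/2) + 2 * S ≤
        (1/(y - x)) * ((y - x) * (f m + f M) - If - 2 * Ig) := by
      refine hh1.trans ?_
      apply mul_le_mul_of_nonneg_left _ (one_div_nonneg.mpr hyx.le)
      linarith [hptmono, hrefl, hrhs]
    rw [hIcomb]
    have heq : (1/(y - x)) * ((y - x) * (f m + f M) - If - 2 * Ig) =
        f m + f M - (1/(y - x)) * (If + 2 * Ig) := by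
      field_simp
      ring
    linarith [chain, heq]
  · rw [hIcomb, hIβ]
    have e1 : 1/(y - x) * (If + 2 * Ig) = 1/(y - x) * If + 2/(y - x) * Ig := by ring
    linarith [hh2, e1]
end

section
/- If f : [0,∞) → ℝ is a superquadratic function, then for all 0 ≤ x < y: f((x+y)/2) + 2∫₀^{1/2} f(u·|x−y|) du ≤ (1/(y−x))·∫ₓ^y f(t) dt ≤ (f(x)+f(y))/2 − 2f(0) − 2∫₀¹ (1−u)·f(u·|x−y|) du. -/
theorem hermite_hadamard_superquadratic
    (f : ℝ → ℝ) (hf : Superquadratic f) (hf_cont : Continuous f)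
    (x y : ℝ) (hx : 0 ≤ x) (hxy : x < y) :
    f ((x + y) / 2) + 2 * (∫ u in (0 : ℝ)..(1 / 2), f (u * |x - y|)) ≤
        (1 / (y - x)) * (∫ t in x..y, f t) ∧
      (1 / (y - x)) * (∫ t in x..y, f t) ≤
        (f x + f y) / 2 - 2 * f 0 - 2 * (∫ u in (0 : ℝ)..1, (1 - u) * f (u * |x - y|)) := by
  have hh : (0:ℝ) < y - x := sub_pos.mpr hxy
  have hy : (0:ℝ) ≤ y := hx.trans hxy.le
  have habs : |x - y| = y - x := by rw [abs_sub_comm]; exact abs_of_pos hh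
  set h : ℝ := y - x with hdef
  have hne : h ≠ 0 := ne_of_gt hh
  -- f 0 ≤ 0
  have hf0 : f 0 ≤ 0 := by
    obtain ⟨C, hC⟩ := hf 0 le_rfl
    have := hC 0 le_rfl
    simp at this
    linarith
  constructor
  · -- left inequality
    set m : ℝ := (x + y) / 2 with hm
    have hm0 : 0 ≤ m := by positivity
    obtain ⟨C, hC⟩ := hf m hm0
    -- pointwise bound on [x,y]
    have hpt : ∀ t ∈ Set.Icc x y, f m + C * (t - m) + f (|t - m|) ≤ f t := by
      intro t ht
      exact hC t (hx.trans ht.1)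
    -- integrability
    have hi1 : IntervalIntegrable (fun t => f m + C * (t - m) + f (|t - m|)) MeasureTheory.volume x y := by
      apply Continuous.intervalIntegrable
      fun_prop
    have hi2 : IntervalIntegrable f MeasureTheory.volume x y := hf_cont.intervalIntegrable x y
    have hmono := intervalIntegral.integral_mono_on hxy.le hi1 hi2 hpt
    -- compute the integral of the lower bound
    have e1 : ∫ t in x..y, (f m + C * (t - m) + f (|t - m|))
        = (y - x) * f m + C * (∫ t in x..y, (t - m)) + ∫ t in x..y, f (|t - m|) := by
      rw [intervalIntegral.integral_add, intervalIntegral.integral_add,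
        intervalIntegral.integral_const, intervalIntegral.integral_const_mul]
      · simp [smul_eq_mul]
      all_goals apply Continuous.intervalIntegrable; fun_prop
    have e2 : (∫ t in x..y, (t - m)) = 0 := by
      rw [intervalIntegral.integral_comp_sub_right (fun s => s) m, integral_id, hm]
      ring
    have e3 : (∫ t in x..y, f (|t - m|)) = 2 * ∫ s in (0:ℝ)..(h/2), f s := by
      have c1 : (∫ t in x..y, f (|t - m|)) = ∫ s in (x - m)..(y - m), f (|s|) :=
        (intervalIntegral.integral_comp_sub_right (fun s => f (|s|)) m).symm ▸ rfl
      have hxm : x - m = -(h/2) := by rw [hm, hdef]; ring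
      have hym : y - m = h/2 := by rw [hm, hdef]; ring
      have hsplit : (∫ s in (-(h/2))..(h/2), f (|s|))
          = (∫ s in (-(h/2))..(0:ℝ), f (|s|)) + ∫ s in (0:ℝ)..(h/2), f (|s|) := by
        rw [intervalIntegral.integral_add_adjacent_intervals] <;>
          (apply Continuous.intervalIntegrable; continuity)
      have hneg : (∫ s in (-(h/2))..(0:ℝ), f (|s|)) = ∫ s in (0:ℝ)..(h/2), f (|s|) := by
        have := intervalIntegral.integral_comp_neg (fun s => f (|s|)) (a := 0) (b := h/2)
        simp only [abs_neg, neg_zero] at this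
        exact this.symm
      have habs' : (∫ s in (0:ℝ)..(h/2), f (|s|)) = ∫ s in (0:ℝ)..(h/2), f s := by
        apply intervalIntegral.integral_congr
        intro s hs
        rw [Set.uIcc_of_le (by positivity)] at hs
        show f |s| = f s
        rw [abs_of_nonneg hs.1]
      rw [c1, hxm, hym, hsplit, hneg, habs']; ring
    have e4 : (∫ u in (0:ℝ)..(1/2), f (u * |x - y|)) = h⁻¹ * ∫ s in (0:ℝ)..(h/2), f s := by
      rw [habs]
      have := intervalIntegral.integral_comp_mul_right f (a := 0) (b := 1/2) (c := h) hne
      simp only [zero_mul, smul_eq_mul] at this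
      rw [this, show (1:ℝ)/2 * h = h/2 from by ring]
    rw [e1, e2, e3] at hmono
    rw [e4]
    have key : (1 / h) * ((y - x) * f m + C * 0 + 2 * ∫ s in (0:ℝ)..(h/2), f s)
        = f m + 2 * (h⁻¹ * ∫ s in (0:ℝ)..(h/2), f s) := by
      rw [hdef]
      rw [one_div, mul_add, mul_add, ← mul_assoc, inv_mul_cancel₀ (sub_ne_zero.mpr hxy.ne')]
      ring
    calc f m + 2 * (h⁻¹ * ∫ s in (0:ℝ)..(h/2), f s)
        = (1 / h) * ((y - x) * f m + C * 0 + 2 * ∫ s in (0:ℝ)..(h/2), f s) := key.symm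
      _ ≤ (1 / h) * ∫ t in x..y, f t := by
          apply mul_le_mul_of_nonneg_left hmono (by positivity)
  · -- right inequality
    -- pointwise bound
    have hpt : ∀ u ∈ Set.Icc (0:ℝ) 1,
        f (h * u + x) ≤ (1 - u) * f x + u * f y - (1 - u) * f (u * h) - u * f ((1 - u) * h) := by
      intro u hu
      obtain ⟨hu0, hu1⟩ := hu
      set t : ℝ := h * u + x with ht
      have ht0 : 0 ≤ t := by positivity
      obtain ⟨C, hC⟩ := hf t ht0
      have h1 := hC x hx
      have h2 := hC y hy
      have e1 : |x - t| = u * h := by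
        rw [ht, abs_sub_comm]
        have : h * u + x - x = u * h := by ring
        rw [this, abs_of_nonneg (by positivity)]
      have e2 : |y - t| = (1 - u) * h := by
        have : y - t = (1 - u) * h := by rw [ht, hdef]; ring
        rw [this, abs_of_nonneg (mul_nonneg (by linarith) hh.le)]
      rw [e1] at h1
      rw [e2] at h2
      have hxt : x - t = -(u * h) := by rw [ht]; ring
      have hyt : y - t = (1 - u) * h := by rw [ht, hdef]; ring
      rw [hxt] at h1
      rw [hyt] at h2
      nlinarith [mul_le_mul_of_nonneg_left h1 (by linarith : (0:ℝ) ≤ 1 - u),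
        mul_le_mul_of_nonneg_left h2 hu0]
    -- integrability
    have hi1 : IntervalIntegrable (fun u => f (h * u + x)) MeasureTheory.volume 0 1 := by
      apply Continuous.intervalIntegrable; fun_prop
    have hi2 : IntervalIntegrable
        (fun u => (1 - u) * f x + u * f y - (1 - u) * f (u * h) - u * f ((1 - u) * h))
        MeasureTheory.volume 0 1 := by
      apply Continuous.intervalIntegrable; fun_prop
    have hmono := intervalIntegral.integral_mono_on (by norm_num) hi1 hi2 hpt
    -- LHS computation
    have eL : (∫ u in (0:ℝ)..1, f (h * u + x)) = h⁻¹ * ∫ t in x..y, f t := by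
      have := intervalIntegral.integral_comp_mul_add f hne x (a := 0) (b := 1)
      simp only [mul_zero, zero_add, mul_one, smul_eq_mul] at this
      rw [this, hdef]
      ring_nf
    -- set A := the integral appearing in the statement
    set A : ℝ := ∫ u in (0:ℝ)..1, (1 - u) * f (u * h) with hA
    have eB : (∫ u in (0:ℝ)..1, u * f ((1 - u) * h)) = A := by
      have c1 : (∫ u in (0:ℝ)..1, u * f ((1 - u) * h))
          = ∫ u in (0:ℝ)..1, (fun v => (1 - v) * f (v * h)) (1 - u) := by
        apply intervalIntegral.integral_congr
        intro u _
        simp only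
        ring_nf
      rw [c1, intervalIntegral.integral_comp_sub_left (fun v => (1 - v) * f (v * h)) 1]
      norm_num [hA]
    have eR : (∫ u in (0:ℝ)..1,
        ((1 - u) * f x + u * f y - (1 - u) * f (u * h) - u * f ((1 - u) * h)))
        = (f x + f y) / 2 - A - A := by
      rw [intervalIntegral.integral_sub, intervalIntegral.integral_sub,
        intervalIntegral.integral_add, intervalIntegral.integral_mul_const,
        intervalIntegral.integral_mul_const, eB, ← hA]
      · have i1 : (∫ u in (0:ℝ)..1, (1 - u)) = 1/2 := by
          have r : (∫ u in (0:ℝ)..1, (1 - u)) = ∫ u in (0:ℝ)..1, (fun s : ℝ => s) (1 - u) := rfl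
          rw [r, intervalIntegral.integral_comp_sub_left (fun s : ℝ => s) 1, integral_id]
          norm_num
        have i2 : (∫ u in (0:ℝ)..1, u) = 1/2 := by norm_num [integral_id]
        rw [i1, i2]; ring
      all_goals apply Continuous.intervalIntegrable; fun_prop
    rw [eL, eR] at hmono
    rw [habs, ← hA]
    rw [one_div]
    linarith
end

section
/- Let 0 ≤ m < M, let x, y ∈ [m,M] with x < y, and let p ≥ 2. Define β_p(t) = ((M−t)(t−m)/(M−m))·((M−t)^{p−1} + (t−m)^{p−1}). Then (m + M − (x+y)/2)^p + (1/(2^p(p+1)))·|x−y|^p ≤ ((M+m−x)^{p+1} − (M+m−y)^{p+1}) / ((p+1)(y−x)) ≤ m^p + M^p − (x^p + y^p)/2 − (β_p(x) + β_p(y)) − 2|x−y|^p/((p+1)(p+2)). -/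
open Real

lemma superadd {q a b : ℝ} (hq : 1 ≤ q) (ha : 0 ≤ a) (hb : 0 ≤ b) :
    a ^ q + b ^ q ≤ (a + b) ^ q := by
  have := NNReal.add_rpow_le_rpow_add (a.toNNReal) (b.toNNReal) hq
  have h := NNReal.coe_le_coe.2 this
  push_cast at h
  rwa [Real.coe_toNNReal _ ha, Real.coe_toNNReal _ hb] at h

/-- superquadraticity of `t ^ p` for `p ≥ 2`. -/
lemma superquad {p : ℝ} (hp : 2 ≤ p) {a b : ℝ} (ha : 0 ≤ a) (hb : 0 ≤ b) :
    b ^ p + p * b ^ (p - 1) * (a - b) + |a - b| ^ p ≤ a ^ p := by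
  have hp1 : (1:ℝ) ≤ p := by linarith
  have hp1' : (1:ℝ) ≤ p - 1 := by linarith
  rcases le_or_gt b a with h | h
  · -- g t = t^p - p b^(p-1) t - (t-b)^p monotone on [b, ∞)
    set g : ℝ → ℝ := fun t => t ^ p - p * b ^ (p-1) * t - (t - b) ^ p with hg
    have hd : ∀ t : ℝ, HasDerivAt g
        (p * t ^ (p-1) - p * b ^ (p-1) - p * (t - b) ^ (p-1)) t := by
      intro t
      have h1 : HasDerivAt (fun t : ℝ => t ^ p) (p * t ^ (p-1)) t := by
        simpa [mul_comm] using Real.hasDerivAt_rpow_const (x := t) (p := p) (Or.inr hp1)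
      have h2 : HasDerivAt (fun t : ℝ => (t - b) ^ p) (p * (t - b) ^ (p-1)) t := by
        have h3 : HasDerivAt (fun t : ℝ => (t - b) ^ p) ((p * (t - b) ^ (p-1)) * 1) t := by
          exact (Real.hasDerivAt_rpow_const (x := t - b) (p := p) (Or.inr hp1)).comp (h := fun t : ℝ => t - b) (x := t)
            (by simpa using (hasDerivAt_id t).sub_const b)
        simpa using h3
      have h4 : HasDerivAt (fun t : ℝ => p * b ^ (p-1) * t) (p * b ^ (p-1)) t := by
        simpa using (hasDerivAt_id t).const_mul (p * b ^ (p-1))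
      exact (h1.sub h4).sub h2
    have hmono : MonotoneOn g (Set.Ici b) := by
      apply monotoneOn_of_hasDerivWithinAt_nonneg (convex_Ici b)
        (fun t ht => (hd t).continuousAt.continuousWithinAt)
        (fun t ht => (hd t).hasDerivWithinAt)
      intro t ht
      rw [interior_Ici] at ht
      have htb : b ≤ t := le_of_lt ht
      have := superadd hp1' hb (by linarith : (0:ℝ) ≤ t - b)
      have : b ^ (p-1) + (t - b) ^ (p-1) ≤ t ^ (p-1) := by
        simpa using this
      nlinarith [hp1]
    have := hmono (Set.mem_Ici.2 (le_refl b)) (Set.mem_Ici.2 h) h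
    simp only [hg] at this
    rw [abs_of_nonneg (by linarith : (0:ℝ) ≤ a - b)]
    have hb0 : (b - b) ^ p = 0 := by simp [Real.zero_rpow (by positivity : p ≠ 0)]
    nlinarith [this]
  · -- g t = t^p - p b^(p-1) t + (b-t)^p antitone on [0, b]
    set g : ℝ → ℝ := fun t => t ^ p - p * b ^ (p-1) * t - (b - t) ^ p with hg
    have hd : ∀ t : ℝ, HasDerivAt g
        (p * t ^ (p-1) - p * b ^ (p-1) + p * (b - t) ^ (p-1)) t := by
      intro t
      have h1 : HasDerivAt (fun t : ℝ => t ^ p) (p * t ^ (p-1)) t := by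
        simpa [mul_comm] using Real.hasDerivAt_rpow_const (x := t) (p := p) (Or.inr hp1)
      have h2 : HasDerivAt (fun t : ℝ => (b - t) ^ p) ((p * (b - t) ^ (p-1)) * (-1)) t := by
        exact (Real.hasDerivAt_rpow_const (x := b - t) (p := p) (Or.inr hp1)).comp (h := fun t : ℝ => b - t) (x := t)
          (by simpa using (hasDerivAt_id t).const_sub b)
      have h4 : HasDerivAt (fun t : ℝ => p * b ^ (p-1) * t) (p * b ^ (p-1)) t := by
        simpa using (hasDerivAt_id t).const_mul (p * b ^ (p-1))
      have := (h1.sub h4).sub h2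
      convert this using 1
      exacts [rfl, rfl, rfl, by ring]
    have hanti : AntitoneOn g (Set.Icc 0 b) := by
      apply antitoneOn_of_hasDerivWithinAt_nonpos (convex_Icc 0 b)
        (fun t ht => (hd t).continuousAt.continuousWithinAt)
        (fun t ht => (hd t).hasDerivWithinAt)
      intro t ht
      rw [interior_Icc] at ht
      have := superadd hp1' (le_of_lt ht.1) (by linarith [ht.2] : (0:ℝ) ≤ b - t)
      have h5 : t ^ (p-1) + (b - t) ^ (p-1) ≤ b ^ (p-1) := by
        simpa using this
      nlinarith [hp1]
    have hb' : 0 ≤ b := le_trans ha h.le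
    have := hanti (Set.mem_Icc.2 ⟨ha, h.le⟩) (Set.mem_Icc.2 ⟨hb', le_refl b⟩) h.le
    simp only [hg] at this
    rw [abs_of_nonpos (by linarith : a - b ≤ 0), neg_sub]
    have hb0 : (b - b) ^ p = 0 := by simp [Real.zero_rpow (by positivity : p ≠ 0)]
    nlinarith [this]

lemma rpow_succ' {p s : ℝ} (hs : 0 ≤ s) (hp : 1 ≤ p) : s ^ p = s * s ^ (p - 1) := by
  rcases eq_or_lt_of_le hs with h | h
  · rw [← h, Real.zero_rpow (by positivity : p ≠ 0)]; ring
  · rw [mul_comm, ← Real.rpow_add_one (ne_of_gt h) (p - 1)]; ring_nf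

lemma cont_rpow {p : ℝ} (hp : 0 < p) : Continuous (fun s : ℝ => s ^ p) := by
  rw [continuous_iff_continuousAt]
  intro x
  exact Real.continuousAt_rpow_const x p (Or.inr hp.le)

lemma chord {p : ℝ} (hp : 2 ≤ p) {u v t : ℝ} (hu : 0 ≤ u) (hut : u ≤ t) (htv : t ≤ v) :
    (v - u) * t ^ p + (v - t) * (t - u) ^ p + (t - u) * (v - t) ^ p ≤
      (v - t) * u ^ p + (t - u) * v ^ p := by
  have ht : 0 ≤ t := le_trans hu hut
  have s1 := superquad hp hu ht
  have s2 := superquad hp (by linarith : (0:ℝ) ≤ v) ht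
  rw [abs_of_nonpos (by linarith : u - t ≤ 0), neg_sub] at s1
  rw [abs_of_nonneg (by linarith : (0:ℝ) ≤ v - t)] at s2
  nlinarith [mul_le_mul_of_nonneg_left s1 (by linarith : (0:ℝ) ≤ v - t),
    mul_le_mul_of_nonneg_left s2 (by linarith : (0:ℝ) ≤ t - u)]

lemma mercer {m M p t : ℝ} (hm : 0 ≤ m) (hmM : m < M) (hp : 2 ≤ p)
    (ht : t ∈ Set.Icc m M) :
    (m + M - t) ^ p + t ^ p +
      2 * ((M - t) * (t - m) / (M - m) * ((M - t) ^ (p - 1) + (t - m) ^ (p - 1))) ≤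
      m ^ p + M ^ p := by
  obtain ⟨htm, htM⟩ := ht
  have hp1 : (1:ℝ) ≤ p := by linarith
  have c1 := chord hp hm htm htM
  have c2 := chord hp hm (by linarith : m ≤ m + M - t) (by linarith : m + M - t ≤ M)
  have e1 : M - (m + M - t) = t - m := by ring
  have e2 : m + M - t - m = M - t := by ring
  rw [e1, e2] at c2
  have r1 : (M - t) ^ p = (M - t) * (M - t) ^ (p - 1) := rpow_succ' (by linarith) hp1
  have r2 : (t - m) ^ p = (t - m) * (t - m) ^ (p - 1) := rpow_succ' (by linarith) hp1
  have hMm : (0:ℝ) < M - m := by linarith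
  rw [div_mul_eq_mul_div, ← sub_nonneg]
  have key : (M - m) * (m ^ p + M ^ p) -
      ((M - m) * ((m + M - t) ^ p + t ^ p) +
        2 * ((M - t) * (t - m) * ((M - t) ^ (p - 1) + (t - m) ^ (p - 1)))) ≥ 0 := by
    nlinarith [c1, c2]
  have expand : m ^ p + M ^ p -
      ((m + M - t) ^ p + t ^ p +
        2 * ((M - t) * (t - m) * ((M - t) ^ (p - 1) + (t - m) ^ (p - 1)) / (M - m))) =
      ((M - m) * (m ^ p + M ^ p) -
      ((M - m) * ((m + M - t) ^ p + t ^ p) +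
        2 * ((M - t) * (t - m) * ((M - t) ^ (p - 1) + (t - m) ^ (p - 1))))) / (M - m) := by
    field_simp
  rw [expand]
  positivity

lemma leftint {p u v : ℝ} (hp : 2 ≤ p) (hu : 0 ≤ u) (huv : u < v) :
    ((u + v) / 2) ^ p + 1 / (2 ^ p * (p + 1)) * (v - u) ^ p ≤
      (v ^ (p + 1) - u ^ (p + 1)) / ((p + 1) * (v - u)) := by
  have hp0 : (0:ℝ) < p := by linarith
  have hp1 : (0:ℝ) < p + 1 := by linarith
  set c : ℝ := (u + v) / 2 with hc
  set L : ℝ := v - u with hL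
  have hLpos : 0 < L := by simp [hL]; linarith
  have hc0 : 0 ≤ c := by rw [hc]; linarith
  set h : ℝ := L / 2 with hh
  have hhpos : 0 < h := by positivity
  -- pointwise inequality
  have key : ∀ t ∈ Set.Icc u v,
      c ^ p + p * c ^ (p - 1) * (t - c) + |t - c| ^ p ≤ t ^ p := by
    intro t ht
    have := superquad hp (by linarith [ht.1] : (0:ℝ) ≤ t) hc0
    linarith [this]
  -- integrability
  have contf : Continuous (fun t : ℝ => c ^ p + p * c ^ (p - 1) * (t - c) + |t - c| ^ p) := by
    apply Continuous.add
    · exact continuous_const.add (continuous_const.mul (continuous_id.sub continuous_const))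
    · exact (cont_rpow hp0).comp ((continuous_id.sub continuous_const).abs)
  have contg : Continuous (fun t : ℝ => t ^ p) := cont_rpow hp0
  have hint := intervalIntegral.integral_mono_on (μ := MeasureTheory.volume) huv.le
    (contf.intervalIntegrable u v) (contg.intervalIntegrable u v) key
  -- compute RHS integral
  have hR : (∫ t in u..v, t ^ p) = (v ^ (p + 1) - u ^ (p + 1)) / (p + 1) :=
    integral_rpow (Or.inl (by linarith : (-1:ℝ) < p))
  -- compute the |t-c|^p integral
  have hA : (∫ t in u..v, |t - c| ^ p) = 2 * h ^ (p + 1) / (p + 1) := by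
    have h1 : (∫ t in u..v, |t - c| ^ p) = ∫ s in (u - c)..(v - c), |s| ^ p :=
      intervalIntegral.integral_comp_sub_right (fun s => |s| ^ p) c
    have huc : u - c = -h := by rw [hc, hh, hL]; ring
    have hvc : v - c = h := by rw [hc, hh, hL]; ring
    rw [h1, huc, hvc]
    have hi : IntervalIntegrable (fun s : ℝ => |s| ^ p) MeasureTheory.volume (-h) 0 :=
      ((cont_rpow hp0).comp continuous_abs).intervalIntegrable _ _
    have hi2 : IntervalIntegrable (fun s : ℝ => |s| ^ p) MeasureTheory.volume 0 h :=
      ((cont_rpow hp0).comp continuous_abs).intervalIntegrable _ _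
    rw [← intervalIntegral.integral_add_adjacent_intervals hi hi2]
    have hpos : (∫ s in (0:ℝ)..h, |s| ^ p) = h ^ (p + 1) / (p + 1) := by
      rw [intervalIntegral.integral_congr (g := fun s : ℝ => s ^ p)
        (by intro s hs
            rw [Set.uIcc_of_le hhpos.le] at hs
            simp [abs_of_nonneg hs.1])]
      rw [integral_rpow (Or.inl (by linarith : (-1:ℝ) < p))]
      rw [Real.zero_rpow (by positivity : p + 1 ≠ 0)]
      ring
    have hneg : (∫ s in (-h)..(0:ℝ), |s| ^ p) = h ^ (p + 1) / (p + 1) := by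
      have := intervalIntegral.integral_comp_neg (a := (0:ℝ)) (b := h) (fun s : ℝ => |s| ^ p)
      simp only [abs_neg, neg_zero] at this
      rw [← this, hpos]
    rw [hpos, hneg]; ring
  -- compute full LHS integral
  have hLHS : (∫ t in u..v, (c ^ p + p * c ^ (p - 1) * (t - c) + |t - c| ^ p)) =
      c ^ p * L + 2 * h ^ (p + 1) / (p + 1) := by
    have i1 : IntervalIntegrable (fun t : ℝ => c ^ p + p * c ^ (p - 1) * (t - c))
        MeasureTheory.volume u v :=
      (continuous_const.add (continuous_const.mul (continuous_id.sub continuous_const))).intervalIntegrable _ _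
    have i2 : IntervalIntegrable (fun t : ℝ => |t - c| ^ p) MeasureTheory.volume u v :=
      ((cont_rpow hp0).comp ((continuous_id.sub continuous_const).abs)).intervalIntegrable _ _
    rw [intervalIntegral.integral_add i1 i2, hA]
    congr 1
    have i3 : IntervalIntegrable (fun t : ℝ => p * c ^ (p - 1) * (t - c))
        MeasureTheory.volume u v :=
      (continuous_const.mul (continuous_id.sub continuous_const)).intervalIntegrable _ _
    rw [intervalIntegral.integral_add (intervalIntegrable_const) i3,
      intervalIntegral.integral_const, intervalIntegral.integral_const_mul]
    have : (∫ t in u..v, (t - c)) = 0 := by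
      rw [intervalIntegral.integral_sub (continuous_id'.intervalIntegrable _ _) intervalIntegrable_const,
        integral_id, intervalIntegral.integral_const]
      simp only [smul_eq_mul, hc]; ring
    rw [this, hL]
    simp [mul_comm]
  rw [hLHS, hR] at hint
  -- now arithmetic
  have h2p : (0:ℝ) < 2 ^ p := Real.rpow_pos_of_pos (by norm_num) p
  have hhp : h ^ (p + 1) = L ^ p * L / (2 ^ p * 2) := by
    rw [hh, Real.div_rpow hLpos.le (by norm_num : (0:ℝ) ≤ 2),
      Real.rpow_add_one (ne_of_gt hLpos) p,
      Real.rpow_add_one (by norm_num : (2:ℝ) ≠ 0) p]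
  rw [hhp] at hint
  rw [le_div_iff₀ (by positivity : (0:ℝ) < (p + 1) * L)]
  have e : (c ^ p + 1 / (2 ^ p * (p + 1)) * L ^ p) * ((p + 1) * L) =
      (c ^ p * L + 2 * (L ^ p * L / (2 ^ p * 2)) / (p + 1)) * (p + 1) := by
    field_simp
  rw [e]
  calc (c ^ p * L + 2 * (L ^ p * L / (2 ^ p * 2)) / (p + 1)) * (p + 1)
      ≤ ((v ^ (p + 1) - u ^ (p + 1)) / (p + 1)) * (p + 1) :=
        mul_le_mul_of_nonneg_right hint hp1.le
    _ = v ^ (p + 1) - u ^ (p + 1) := div_mul_cancel₀ _ (ne_of_gt hp1)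

lemma rightint {p u v : ℝ} (hp : 2 ≤ p) (hu : 0 ≤ u) (huv : u < v) :
    (v ^ (p + 1) - u ^ (p + 1)) / ((p + 1) * (v - u)) ≤
      (u ^ p + v ^ p) / 2 - 2 * (v - u) ^ p / ((p + 1) * (p + 2)) := by
  have hp0 : (0:ℝ) < p := by linarith
  have hp1 : (0:ℝ) < p + 1 := by linarith
  have hp2 : (0:ℝ) < p + 2 := by linarith
  set L : ℝ := v - u with hL
  have hLpos : 0 < L := by rw [hL]; linarith
  -- J = ∫_0^L (L - s) s^p ds
  have hJ : (∫ s in (0:ℝ)..L, (L - s) * s ^ p) = L ^ p * L * L / ((p + 1) * (p + 2)) := by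
    rw [intervalIntegral.integral_congr (g := fun s : ℝ => L * s ^ p - s ^ (p + 1))
      (by intro s hs
          rw [Set.uIcc_of_le hLpos.le] at hs
          simp only
          rw [rpow_succ' hs.1 (by linarith : (1:ℝ) ≤ p + 1)]
          ring)]
    rw [intervalIntegral.integral_sub
      ((show Continuous (fun s : ℝ => L * s ^ p) from continuous_const.mul (cont_rpow hp0)).intervalIntegrable _ _)
      ((cont_rpow (by linarith : (0:ℝ) < p + 1)).intervalIntegrable _ _)]
    rw [intervalIntegral.integral_const_mul,
      integral_rpow (Or.inl (by linarith : (-1:ℝ) < p)),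
      integral_rpow (Or.inl (by linarith : (-1:ℝ) < p + 1))]
    rw [Real.zero_rpow (by positivity : p + 1 ≠ 0),
      Real.zero_rpow (by positivity : p + 1 + 1 ≠ 0)]
    rw [Real.rpow_add_one (ne_of_gt hLpos) p,
      show p + 1 + 1 = (p + 1) + 1 from rfl,
      Real.rpow_add_one (ne_of_gt hLpos) (p + 1),
      Real.rpow_add_one (ne_of_gt hLpos) p]
    field_simp
    ring
  -- I3
  have hI3 : (∫ t in u..v, (v - t) * (t - u) ^ p) = L ^ p * L * L / ((p + 1) * (p + 2)) := by
    rw [intervalIntegral.integral_congr (g := fun t : ℝ => (fun s : ℝ => (L - s) * s ^ p) (t - u))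
      (by intro t ht; simp only; rw [hL]; ring_nf)]
    rw [intervalIntegral.integral_comp_sub_right (fun s : ℝ => (L - s) * s ^ p) u]
    rw [sub_self]
    rw [← hL, hJ]
  -- I4
  have hI4 : (∫ t in u..v, (t - u) * (v - t) ^ p) = L ^ p * L * L / ((p + 1) * (p + 2)) := by
    rw [intervalIntegral.integral_congr (g := fun t : ℝ => (fun s : ℝ => (L - s) * s ^ p) (v - t))
      (by intro t ht; simp only; rw [hL]; ring_nf)]
    rw [intervalIntegral.integral_comp_sub_left (fun s : ℝ => (L - s) * s ^ p) v]
    rw [sub_self]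
    rw [show v - u = L from rfl, hJ]
  -- pointwise
  have key : ∀ t ∈ Set.Icc u v, t ^ p ≤
      (1 / L) * ((v - t) * u ^ p + (t - u) * v ^ p
        - (v - t) * (t - u) ^ p - (t - u) * (v - t) ^ p) := by
    intro t ht
    have hch := chord hp hu ht.1 ht.2
    rw [mul_comm, ← div_eq_mul_one_div, le_div_iff₀ hLpos]
    rw [hL]
    nlinarith [hch]
  -- integrability of RHS
  have contR : Continuous (fun t : ℝ => (1 / L) * ((v - t) * u ^ p + (t - u) * v ^ p
      - (v - t) * (t - u) ^ p - (t - u) * (v - t) ^ p)) := by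
    apply Continuous.mul continuous_const
    apply Continuous.sub
    apply Continuous.sub
    · exact ((continuous_const.sub continuous_id).mul continuous_const).add
        ((continuous_id.sub continuous_const).mul continuous_const)
    · exact (continuous_const.sub continuous_id).mul
        ((cont_rpow hp0).comp (continuous_id.sub continuous_const))
    · exact (continuous_id.sub continuous_const).mul
        ((cont_rpow hp0).comp (continuous_const.sub continuous_id))
  have hint := intervalIntegral.integral_mono_on (μ := MeasureTheory.volume) huv.le
    ((cont_rpow hp0).intervalIntegrable u v) (contR.intervalIntegrable u v) key
  -- compute RHS integral
  have hRHS : (∫ t in u..v, (1 / L) * ((v - t) * u ^ p + (t - u) * v ^ p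
      - (v - t) * (t - u) ^ p - (t - u) * (v - t) ^ p)) =
      (1 / L) * (u ^ p * (L ^ 2 / 2) + v ^ p * (L ^ 2 / 2)
        - L ^ p * L * L / ((p + 1) * (p + 2)) - L ^ p * L * L / ((p + 1) * (p + 2))) := by
    rw [intervalIntegral.integral_const_mul]
    congr 1
    have ia : IntervalIntegrable (fun t : ℝ => (v - t) * u ^ p + (t - u) * v ^ p)
        MeasureTheory.volume u v :=
      (((continuous_const.sub continuous_id).mul continuous_const).add
        ((continuous_id.sub continuous_const).mul continuous_const)).intervalIntegrable _ _
    have ib : IntervalIntegrable (fun t : ℝ => (v - t) * (t - u) ^ p)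
        MeasureTheory.volume u v :=
      ((continuous_const.sub continuous_id).mul
        ((cont_rpow hp0).comp (continuous_id.sub continuous_const))).intervalIntegrable _ _
    have ic : IntervalIntegrable (fun t : ℝ => (t - u) * (v - t) ^ p)
        MeasureTheory.volume u v :=
      ((continuous_id.sub continuous_const).mul
        ((cont_rpow hp0).comp (continuous_const.sub continuous_id))).intervalIntegrable _ _
    rw [intervalIntegral.integral_sub (ia.sub ib) ic,
      intervalIntegral.integral_sub ia ib, hI3, hI4]
    congr 1
    congr 1
    have i5 : IntervalIntegrable (fun t : ℝ => (v - t) * u ^ p) MeasureTheory.volume u v :=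
      ((continuous_const.sub continuous_id).mul continuous_const).intervalIntegrable _ _
    have i6 : IntervalIntegrable (fun t : ℝ => (t - u) * v ^ p) MeasureTheory.volume u v :=
      ((continuous_id.sub continuous_const).mul continuous_const).intervalIntegrable _ _
    rw [intervalIntegral.integral_add i5 i6]
    have e5 : (∫ t in u..v, (v - t) * u ^ p) = u ^ p * (L ^ 2 / 2) := by
      rw [intervalIntegral.integral_mul_const,
        intervalIntegral.integral_sub intervalIntegrable_const
          (continuous_id'.intervalIntegrable _ _),
        intervalIntegral.integral_const, integral_id]
      simp only [smul_eq_mul, hL]; ring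
    have e6 : (∫ t in u..v, (t - u) * v ^ p) = v ^ p * (L ^ 2 / 2) := by
      rw [intervalIntegral.integral_mul_const,
        intervalIntegral.integral_sub (continuous_id'.intervalIntegrable _ _)
          intervalIntegrable_const,
        integral_id, intervalIntegral.integral_const]
      simp only [smul_eq_mul, hL]; ring
    rw [e5, e6]
  rw [hRHS, integral_rpow (Or.inl (by linarith : (-1:ℝ) < p))] at hint
  -- final arithmetic
  rw [div_le_iff₀ (by positivity : (0:ℝ) < (p + 1) * L)]
  have hint' : v ^ (p + 1) - u ^ (p + 1) ≤
      ((1 / L) * (u ^ p * (L ^ 2 / 2) + v ^ p * (L ^ 2 / 2)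
        - L ^ p * L * L / ((p + 1) * (p + 2)) - L ^ p * L * L / ((p + 1) * (p + 2)))) * (p + 1) :=
    (div_le_iff₀ hp1).1 hint
  calc v ^ (p + 1) - u ^ (p + 1) ≤ _ := hint'
    _ = ((u ^ p + v ^ p) / 2 - 2 * L ^ p / ((p + 1) * (p + 2))) * ((p + 1) * L) := by
      field_simp
      ring

theorem mercer_hermite_hadamard_rpow
    (m M : ℝ) (hm : 0 ≤ m) (hmM : m < M)
    (x y : ℝ) (hx : x ∈ Set.Icc m M) (hy : y ∈ Set.Icc m M) (hxy : x < y)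
    (p : ℝ) (hp : 2 ≤ p)
    (βp : ℝ → ℝ)
    (hβp : ∀ t ∈ Set.Icc m M,
      βp t = (M - t) * (t - m) / (M - m) * ((M - t) ^ (p - 1) + (t - m) ^ (p - 1))) :
    (m + M - (x + y) / 2) ^ p + 1 / (2 ^ p * (p + 1)) * |x - y| ^ p ≤
        ((M + m - x) ^ (p + 1) - (M + m - y) ^ (p + 1)) / ((p + 1) * (y - x)) ∧
      ((M + m - x) ^ (p + 1) - (M + m - y) ^ (p + 1)) / ((p + 1) * (y - x)) ≤
        m ^ p + M ^ p - (x ^ p + y ^ p) / 2 - (βp x + βp y) -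
          2 * |x - y| ^ p / ((p + 1) * (p + 2)) := by
  set u : ℝ := M + m - y with hu
  set v : ℝ := M + m - x with hv
  have hu0 : 0 ≤ u := by have := hy.2; rw [hu]; linarith
  have huv : u < v := by rw [hu, hv]; linarith
  have habs : |x - y| = v - u := by
    rw [abs_of_nonpos (by linarith : x - y ≤ 0), hu, hv]; ring
  have hmid : m + M - (x + y) / 2 = (u + v) / 2 := by rw [hu, hv]; ring
  have hyx : y - x = v - u := by rw [hu, hv]; ring
  constructor
  · have := leftint hp hu0 huv
    rw [hmid, habs, hyx]
    exact this
  · have hR := rightint hp hu0 huv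
    have mx := mercer hm hmM hp hx
    have my := mercer hm hmM hp hy
    rw [hβp x hx, hβp y hy]
    rw [show m + M - x = v from by rw [hv]; ring] at mx
    rw [show m + M - y = u from by rw [hu]; ring] at my
    rw [habs, hyx]
    have e1 : (v ^ p + u ^ p) / 2 ≤ m ^ p + M ^ p - (x ^ p + y ^ p) / 2 -
        ((M - x) * (x - m) / (M - m) * ((M - x) ^ (p - 1) + (x - m) ^ (p - 1)) +
         (M - y) * (y - m) / (M - m) * ((M - y) ^ (p - 1) + (y - m) ^ (p - 1))) := by
      linarith
    linarith
end

section
/- Let 0 ≤ m < M, let x, y ∈ [m,M] with x < y, and let 1 ≤ p ≤ 2. Define β_p(t) = ((M−t)(t−m)/(M−m))·((M−t)^{p−1} + (t−m)^{p−1}). Then the reversed inequalities hold: (m + M − (x+y)/2)^p + (1/(2^p(p+1)))·|x−y|^p ≥ ((M+m−x)^{p+1} − (M+m−y)^{p+1}) / ((p+1)(y−x)) ≥ m^p + M^p − (x^p + y^p)/2 − (β_p(x) + β_p(y)) − 2|x−y|^p/((p+1)(p+2)). -/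
open Real Set intervalIntegral


lemma rsubadd {q u v : ℝ} (hq0 : 0 ≤ q) (hq1 : q ≤ 1) (hu : 0 ≤ u) (hv : 0 ≤ v) :
    (u + v) ^ q ≤ u ^ q + v ^ q := by
  lift u to NNReal using hu
  lift v to NNReal using hv
  rw [← NNReal.coe_add, ← NNReal.coe_rpow, ← NNReal.coe_rpow, ← NNReal.coe_rpow,
    ← NNReal.coe_add, NNReal.coe_le_coe]
  exact NNReal.rpow_add_le_add_rpow u v hq0 hq1

lemma key_ineq {p s t : ℝ} (hp1 : 1 ≤ p) (hp2 : p ≤ 2) (hs : 0 ≤ s) (ht : 0 ≤ t) :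
    t ^ p ≤ s ^ p + p * s ^ (p - 1) * (t - s) + |t - s| ^ p := by
  have hp0 : (0:ℝ) < p := by linarith
  have hq0 : 0 ≤ p - 1 := by linarith
  have hq1 : p - 1 ≤ 1 := by linarith
  rcases le_or_gt s t with hst | hst
  · -- t ≥ s
    rw [abs_of_nonneg (by linarith)]
    set g : ℝ → ℝ := fun u => s ^ p + p * s ^ (p - 1) * u + u ^ p - (s + u) ^ p with hg
    have hderiv : ∀ u : ℝ, HasDerivAt g
        (p * s ^ (p - 1) + p * u ^ (p - 1) - 1 * p * (s + u) ^ (p - 1)) u := by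
      intro u
      have h1 : HasDerivAt (fun u : ℝ => s ^ p + p * s ^ (p - 1) * u)
          (p * s ^ (p - 1)) u := by
        simpa using ((hasDerivAt_id u).const_mul (p * s ^ (p - 1))).const_add (s ^ p)
      have h2 : HasDerivAt (fun u : ℝ => u ^ p) (p * u ^ (p - 1)) u :=
        Real.hasDerivAt_rpow_const (Or.inr hp1)
      have h3 : HasDerivAt (fun u : ℝ => (s + u) ^ p)
          (1 * p * (s + u) ^ (p - 1)) u :=
        (((hasDerivAt_id u).const_add s).rpow_const (Or.inr hp1))
      exact (h1.add h2).sub h3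
    have hmono : MonotoneOn g (Ici 0) := by
      apply monotoneOn_of_deriv_nonneg (convex_Ici 0)
        (fun u _ => ((hderiv u).continuousAt.continuousWithinAt))
        (fun u _ => ((hderiv u).differentiableAt.differentiableWithinAt))
      intro u hu
      rw [interior_Ici] at hu
      rw [(hderiv u).deriv]
      have := rsubadd hq0 hq1 hs (le_of_lt hu)
      nlinarith [this]
    have h0 : g 0 ≤ g (t - s) := hmono self_mem_Ici (by simp; linarith) (by linarith)
    have hg0 : g 0 = 0 := by
      simp [hg, Real.zero_rpow (ne_of_gt hp0)]
    have : s + (t - s) = t := by ring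
    rw [hg0] at h0
    simp only [hg, this] at h0
    linarith
  · -- t < s
    have hs0 : 0 < s := lt_of_le_of_lt ht hst
    rw [abs_of_neg (by linarith), neg_sub]
    set g : ℝ → ℝ := fun u => s ^ p + u ^ p - (s - u) ^ p - p * s ^ (p - 1) * u with hg
    have hderiv : ∀ u : ℝ, HasDerivAt g
        (p * u ^ (p - 1) - -1 * p * (s - u) ^ (p - 1) - p * s ^ (p - 1)) u := by
      intro u
      have h2 : HasDerivAt (fun u : ℝ => u ^ p) (p * u ^ (p - 1)) u :=
        Real.hasDerivAt_rpow_const (Or.inr hp1)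
      have h3 : HasDerivAt (fun u : ℝ => (s - u) ^ p)
          (-1 * p * (s - u) ^ (p - 1)) u := by
        have : HasDerivAt (fun u : ℝ => s - u) (-1) u := by
          simpa using ((hasDerivAt_id u).const_sub s)
        exact this.rpow_const (Or.inr hp1)
      have h4 : HasDerivAt (fun u : ℝ => p * s ^ (p - 1) * u) (p * s ^ (p - 1)) u := by
        simpa using (hasDerivAt_id u).const_mul (p * s ^ (p - 1))
      exact ((h2.const_add (s ^ p)).sub h3).sub h4
    have hmono : MonotoneOn g (Icc 0 s) := by
      apply monotoneOn_of_deriv_nonneg (convex_Icc 0 s)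
        (fun u _ => ((hderiv u).continuousAt.continuousWithinAt))
        (fun u hu => ((hderiv u).differentiableAt.differentiableWithinAt))
      intro u hu
      rw [interior_Icc] at hu
      rw [(hderiv u).deriv]
      have hsum : s = u + (s - u) := by ring
      have := rsubadd hq0 hq1 (le_of_lt hu.1) (by linarith [hu.2] : (0:ℝ) ≤ s - u)
      rw [← hsum] at this
      nlinarith [this]
    have h0 : g 0 ≤ g (s - t) := hmono (left_mem_Icc.2 (le_of_lt hs0))
      (by constructor <;> [linarith; linarith]) (by linarith)
    have hg0 : g 0 = 0 := by
      simp [hg, Real.zero_rpow (ne_of_gt hp0)]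
    have hst' : s - (s - t) = t := by ring
    rw [hg0] at h0
    simp only [hg, hst'] at h0
    linarith


lemma int_sub_rpow (a b r : ℝ) (hr : (-1:ℝ) < r) :
    ∫ t in a..b, (t - a) ^ r = (b - a) ^ (r + 1) / (r + 1) := by
  rw [intervalIntegral.integral_comp_sub_right (fun s => s ^ r) a, sub_self,
    integral_rpow (Or.inl hr), Real.zero_rpow (by linarith : r + 1 ≠ 0), sub_zero]

lemma int_rsub_rpow (a b r : ℝ) (hr : (-1:ℝ) < r) :
    ∫ t in a..b, (b - t) ^ r = (b - a) ^ (r + 1) / (r + 1) := by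
  rw [intervalIntegral.integral_comp_sub_left (fun s => s ^ r) b, sub_self,
    integral_rpow (Or.inl hr), Real.zero_rpow (by linarith : r + 1 ≠ 0), sub_zero]

lemma cont_sub_rpow (a r : ℝ) (hr : 0 ≤ r) : Continuous fun t : ℝ => (t - a) ^ r :=
  (continuous_id.sub continuous_const).rpow_const (fun _ => Or.inr hr)

lemma cont_rsub_rpow (b r : ℝ) (hr : 0 ≤ r) : Continuous fun t : ℝ => (b - t) ^ r :=
  (continuous_const.sub continuous_id).rpow_const (fun _ => Or.inr hr)

lemma int_weight_rpow (a b p : ℝ) (hab : a ≤ b) (hp : (1:ℝ) ≤ p) :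
    ∫ t in a..b, (b - t) * (t - a) ^ p = (b - a) ^ (p + 2) / ((p + 1) * (p + 2)) := by
  have hp0 : (0:ℝ) ≤ p := by linarith
  have h1 : ∫ t in a..b, (b - t) * (t - a) ^ p
      = ∫ t in a..b, ((b - a) * (t - a) ^ p - (t - a) ^ (p + 1)) := by
    apply intervalIntegral.integral_congr
    intro t ht
    rw [Set.uIcc_of_le hab] at ht
    show (b - t) * (t - a) ^ p = (b - a) * (t - a) ^ p - (t - a) ^ (p + 1)
    have ht0 : 0 ≤ t - a := by linarith [ht.1]
    have : (t - a) ^ (p + 1) = (t - a) ^ p * (t - a) := by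
      rw [Real.rpow_add' ht0 (by linarith), Real.rpow_one]
    rw [this]; ring
  rw [h1, intervalIntegral.integral_sub (f := fun t => (b - a) * (t - a) ^ p)
      ((continuous_const.mul (cont_sub_rpow a p hp0)).intervalIntegrable a b)
      ((cont_sub_rpow a (p+1) (by linarith)).intervalIntegrable a b),
    intervalIntegral.integral_const_mul, int_sub_rpow a b p (by linarith),
    int_sub_rpow a b (p+1) (by linarith)]
  have hba : 0 ≤ b - a := by linarith
  have h2 : (b - a) ^ (p + 1 + 1) = (b - a) ^ (p + 1) * (b - a) := by
    rw [Real.rpow_add' hba (by linarith), Real.rpow_one]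
  have h3 : (b - a) ^ (p + 2) = (b - a) ^ (p + 1) * (b - a) := by
    rw [show p + 2 = (p + 1) + 1 by ring, Real.rpow_add' hba (by linarith), Real.rpow_one]
  have h4 : (b - a) ^ (p + 1) = (b - a) ^ p * (b - a) := by
    rw [Real.rpow_add' hba (by linarith), Real.rpow_one]
  rw [h2, h3, h4]
  have hp1 : (0:ℝ) < p + 1 := by linarith
  have hp2 : (0:ℝ) < p + 2 := by linarith
  field_simp
  ring

lemma int_weight_rpow' (a b p : ℝ) (hab : a ≤ b) (hp : (1:ℝ) ≤ p) :
    ∫ t in a..b, (t - a) * (b - t) ^ p = (b - a) ^ (p + 2) / ((p + 1) * (p + 2)) := by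
  have h1 : (fun t => (t - a) * (b - t) ^ p)
      = fun t => (fun u => (b - u) * (u - a) ^ p) (a + b - t) := by
    funext t
    simp only []
    congr 1
    · ring
    · congr 1; ring
  rw [h1, intervalIntegral.integral_comp_sub_left (fun u => (b - u) * (u - a) ^ p) (a + b)]
  have : a + b - b = a := by ring
  rw [this, show a + b - a = b by ring, int_weight_rpow a b p hab hp]

lemma jmul {p a b t : ℝ} (hp1 : 1 ≤ p) (hp2 : p ≤ 2) (ha : 0 ≤ a) (hab : a < b)
    (hta : a ≤ t) (htb : t ≤ b) :
    (b - t) * a ^ p + (t - a) * b ^ p ≤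
      (b - a) * t ^ p + (b - t) * (t - a) ^ p + (t - a) * (b - t) ^ p := by
  have ht0 : 0 ≤ t := le_trans ha hta
  have hb0 : 0 ≤ b := le_trans ha (le_of_lt hab)
  have hA := key_ineq hp1 hp2 ht0 ha
  have hB := key_ineq hp1 hp2 ht0 hb0
  rw [abs_of_nonpos (by linarith), neg_sub] at hA
  rw [abs_of_nonneg (by linarith)] at hB
  have e1 := mul_le_mul_of_nonneg_left hA (by linarith : (0:ℝ) ≤ b - t)
  have e2 := mul_le_mul_of_nonneg_left hB (by linarith : (0:ℝ) ≤ t - a)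
  nlinarith [e1, e2]

lemma cont_tp (p : ℝ) (hp : 0 ≤ p) : Continuous fun t : ℝ => t ^ p :=
  continuous_id.rpow_const (fun _ => Or.inr hp)

lemma cont_abs (c p : ℝ) (hp : 0 ≤ p) : Continuous fun t : ℝ => |t - c| ^ p :=
  ((continuous_id.sub continuous_const).abs).rpow_const (fun _ => Or.inr hp)

lemma int_abs_rpow (a b p : ℝ) (hab : a ≤ b) (hp : (1:ℝ) ≤ p) :
    ∫ t in a..b, |t - (a + b) / 2| ^ p = 2 * ((b - a) / 2) ^ (p + 1) / (p + 1) := by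
  have hp0 : (0:ℝ) ≤ p := by linarith
  set c := (a + b) / 2 with hc
  have hac : a ≤ c := by rw [hc]; linarith
  have hcb : c ≤ b := by rw [hc]; linarith
  have hi1 : IntervalIntegrable (fun t : ℝ => |t - c| ^ p) MeasureTheory.volume a c :=
    (cont_abs c p hp0).intervalIntegrable a c
  have hi2 : IntervalIntegrable (fun t : ℝ => |t - c| ^ p) MeasureTheory.volume c b :=
    (cont_abs c p hp0).intervalIntegrable c b
  rw [← intervalIntegral.integral_add_adjacent_intervals hi1 hi2]
  have e1 : ∫ t in a..c, |t - c| ^ p = ∫ t in a..c, (c - t) ^ p := by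
    apply intervalIntegral.integral_congr
    intro t ht
    rw [Set.uIcc_of_le hac] at ht
    show |t - c| ^ p = (c - t) ^ p
    rw [abs_of_nonpos (by linarith [ht.2]), neg_sub]
  have e2 : ∫ t in c..b, |t - c| ^ p = ∫ t in c..b, (t - c) ^ p := by
    apply intervalIntegral.integral_congr
    intro t ht
    rw [Set.uIcc_of_le hcb] at ht
    show |t - c| ^ p = (t - c) ^ p
    rw [abs_of_nonneg (by linarith [ht.1])]
  rw [e1, e2, int_rsub_rpow a c p (by linarith), int_sub_rpow c b p (by linarith)]
  have h1 : c - a = (b - a) / 2 := by rw [hc]; ring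
  have h2 : b - c = (b - a) / 2 := by rw [hc]; ring
  rw [h1, h2]; ring

lemma mainA (a b p : ℝ) (ha : 0 ≤ a) (hab : a < b) (hp1 : 1 ≤ p) (hp2 : p ≤ 2) :
    (b ^ (p + 1) - a ^ (p + 1)) / (p + 1) ≤
      (b - a) * ((a + b) / 2) ^ p + 2 * ((b - a) / 2) ^ (p + 1) / (p + 1) := by
  have hp0 : (0:ℝ) ≤ p := by linarith
  set c := (a + b) / 2 with hc
  have hc0 : (0:ℝ) ≤ c := by rw [hc]; linarith
  have i1 : IntervalIntegrable (fun _ : ℝ => c ^ p) MeasureTheory.volume a b :=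
    (continuous_const).intervalIntegrable a b
  have i2 : IntervalIntegrable (fun t : ℝ => p * c ^ (p - 1) * (t - c))
      MeasureTheory.volume a b :=
    (continuous_const.mul (continuous_id.sub continuous_const)).intervalIntegrable a b
  have i3 : IntervalIntegrable (fun t : ℝ => |t - c| ^ p) MeasureTheory.volume a b :=
    (cont_abs c p hp0).intervalIntegrable a b
  have i12 : IntervalIntegrable (fun t : ℝ => c ^ p + p * c ^ (p - 1) * (t - c))
      MeasureTheory.volume a b := i1.add i2
  have hmono : (∫ t in a..b, t ^ p) ≤
      ∫ t in a..b, (c ^ p + p * c ^ (p - 1) * (t - c) + |t - c| ^ p) := by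
    apply intervalIntegral.integral_mono_on (le_of_lt hab)
      ((cont_tp p hp0).intervalIntegrable a b) (i12.add i3)
    intro t ht
    exact key_ineq hp1 hp2 hc0 (le_trans ha ht.1)
  rw [integral_rpow (Or.inl (by linarith : (-1:ℝ) < p))] at hmono
  rw [intervalIntegral.integral_add i12 i3,
    intervalIntegral.integral_add i1 i2,
    intervalIntegral.integral_const, int_abs_rpow a b p (le_of_lt hab) hp1] at hmono
  have hlin : (∫ t in a..b, p * c ^ (p - 1) * (t - c)) = 0 := by
    have ic : IntervalIntegrable (fun _ : ℝ => c) MeasureTheory.volume a b :=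
      continuous_const.intervalIntegrable a b
    rw [intervalIntegral.integral_const_mul,
      intervalIntegral.integral_sub intervalIntegrable_id ic,
      integral_id, intervalIntegral.integral_const, smul_eq_mul]
    rw [show (b ^ 2 - a ^ 2) / 2 - (b - a) * c = 0 by rw [hc]; ring, mul_zero]
  rw [hlin] at hmono
  simp only [smul_eq_mul] at hmono
  linarith

lemma mainB (a b p : ℝ) (ha : 0 ≤ a) (hab : a < b) (hp1 : 1 ≤ p) (hp2 : p ≤ 2) :
    (a ^ p + b ^ p) * (b - a) ^ (2:ℕ) / 2 ≤
      (b - a) * ((b ^ (p + 1) - a ^ (p + 1)) / (p + 1)) +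
        2 * ((b - a) ^ (p + 2) / ((p + 1) * (p + 2))) := by
  have hp0 : (0:ℝ) ≤ p := by linarith
  have j1 : IntervalIntegrable (fun t : ℝ => (a ^ p * b - b ^ p * a) + (b ^ p - a ^ p) * t)
      MeasureTheory.volume a b :=
    (continuous_const.add (continuous_const.mul continuous_id)).intervalIntegrable a b
  have j2 : IntervalIntegrable (fun t : ℝ => (b - a) * t ^ p) MeasureTheory.volume a b :=
    (continuous_const.mul (cont_tp p hp0)).intervalIntegrable a b
  have j3 : IntervalIntegrable (fun t : ℝ => (b - t) * (t - a) ^ p) MeasureTheory.volume a b :=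
    ((continuous_const.sub continuous_id).mul (cont_sub_rpow a p hp0)).intervalIntegrable a b
  have j4 : IntervalIntegrable (fun t : ℝ => (t - a) * (b - t) ^ p) MeasureTheory.volume a b :=
    ((continuous_id.sub continuous_const).mul (cont_rsub_rpow b p hp0)).intervalIntegrable a b
  have hmono : (∫ t in a..b, ((a ^ p * b - b ^ p * a) + (b ^ p - a ^ p) * t)) ≤
      ∫ t in a..b, ((b - a) * t ^ p + ((b - t) * (t - a) ^ p + (t - a) * (b - t) ^ p)) := by
    apply intervalIntegral.integral_mono_on (le_of_lt hab) j1 (j2.add (j3.add j4))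
    intro t ht
    have := jmul hp1 hp2 ha hab ht.1 ht.2
    nlinarith [this]
  have hL : (∫ t in a..b, ((a ^ p * b - b ^ p * a) + (b ^ p - a ^ p) * t))
      = (a ^ p + b ^ p) * (b - a) ^ (2:ℕ) / 2 := by
    have k1 : IntervalIntegrable (fun _ : ℝ => a ^ p * b - b ^ p * a)
        MeasureTheory.volume a b := continuous_const.intervalIntegrable a b
    have k2 : IntervalIntegrable (fun t : ℝ => (b ^ p - a ^ p) * t)
        MeasureTheory.volume a b :=
      (continuous_const.mul continuous_id).intervalIntegrable a b
    rw [intervalIntegral.integral_add k1 k2,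
      intervalIntegral.integral_const_mul, integral_id, intervalIntegral.integral_const,
      smul_eq_mul]
    ring
  have hR : (∫ t in a..b, ((b - a) * t ^ p + ((b - t) * (t - a) ^ p + (t - a) * (b - t) ^ p)))
      = (b - a) * ((b ^ (p + 1) - a ^ (p + 1)) / (p + 1)) +
        2 * ((b - a) ^ (p + 2) / ((p + 1) * (p + 2))) := by
    rw [intervalIntegral.integral_add j2 (j3.add j4),
      intervalIntegral.integral_add j3 j4,
      intervalIntegral.integral_const_mul, integral_rpow (Or.inl (by linarith : (-1:ℝ) < p)),
      int_weight_rpow a b p (le_of_lt hab) hp1, int_weight_rpow' a b p (le_of_lt hab) hp1]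
    ring
  rw [hL, hR] at hmono
  exact hmono


lemma rpow_split {x p : ℝ} (hx : 0 ≤ x) (hp : 1 ≤ p) : x ^ p = x * x ^ (p - 1) := by
  conv_lhs => rw [show p = 1 + (p - 1) by ring]
  rw [Real.rpow_add' hx (by linarith : (1:ℝ) + (p - 1) ≠ 0), Real.rpow_one]

lemma mercer_pt {p m M t : ℝ} (hp1 : 1 ≤ p) (hp2 : p ≤ 2) (hm : 0 ≤ m) (hmM : m < M)
    (htm : m ≤ t) (htM : t ≤ M) :
    (M - m) * (m ^ p + M ^ p) ≤ (M - m) * t ^ p + (M - m) * (M + m - t) ^ p +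
      2 * ((M - t) * (t - m) * ((M - t) ^ (p - 1) + (t - m) ^ (p - 1))) := by
  have j1 := jmul hp1 hp2 hm hmM htm htM
  have j2 := jmul hp1 hp2 hm hmM (by linarith : m ≤ M + m - t) (by linarith : M + m - t ≤ M)
  rw [show M - (M + m - t) = t - m by ring, show M + m - t - m = M - t by ring] at j2
  have hs1 : (t - m) ^ p = (t - m) * (t - m) ^ (p - 1) :=
    rpow_split (by linarith) hp1
  have hs2 : (M - t) ^ p = (M - t) * (M - t) ^ (p - 1) :=
    rpow_split (by linarith) hp1
  have e1 : (M - t) * (t - m) ^ p = (M - t) * ((t - m) * (t - m) ^ (p - 1)) := by rw [← hs1]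
  have e2 : (t - m) * (M - t) ^ p = (t - m) * ((M - t) * (M - t) ^ (p - 1)) := by rw [← hs2]
  nlinarith [j1, j2, e1, e2]

theorem mercer_hermite_hadamard_rpow_reversed
    (m M : ℝ) (hm : 0 ≤ m) (hmM : m < M)
    (x y : ℝ) (hx : x ∈ Set.Icc m M) (hy : y ∈ Set.Icc m M) (hxy : x < y)
    (p : ℝ) (hp1 : 1 ≤ p) (hp2 : p ≤ 2)
    (βp : ℝ → ℝ)
    (hβp : ∀ t ∈ Set.Icc m M,
      βp t = (M - t) * (t - m) / (M - m) * ((M - t) ^ (p - 1) + (t - m) ^ (p - 1))) :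
    ((M + m - x) ^ (p + 1) - (M + m - y) ^ (p + 1)) / ((p + 1) * (y - x)) ≤
        (m + M - (x + y) / 2) ^ p + 1 / (2 ^ p * (p + 1)) * |x - y| ^ p ∧
      m ^ p + M ^ p - (x ^ p + y ^ p) / 2 - (βp x + βp y) -
          2 * |x - y| ^ p / ((p + 1) * (p + 2)) ≤
        ((M + m - x) ^ (p + 1) - (M + m - y) ^ (p + 1)) / ((p + 1) * (y - x)) := by
  obtain ⟨hxm, hxM⟩ := hx
  obtain ⟨hym, hyM⟩ := hy
  have hβx := hβp x ⟨hxm, hxM⟩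
  have hβy := hβp y ⟨hym, hyM⟩
  set d := y - x with hd'
  set a := M + m - y with ha'
  set b := M + m - x with hb'
  clear_value d a b
  have hd : (0:ℝ) < d := by rw [hd']; linarith
  have ha0 : 0 ≤ a := by rw [ha']; linarith
  have hab : a < b := by rw [ha', hb']; linarith
  have hba : b - a = d := by rw [ha', hb', hd']; ring
  have habs : |x - y| = d := by
    rw [abs_sub_comm, abs_of_pos (by linarith : (0:ℝ) < y - x), hd']
  have hp1p : (0:ℝ) < p + 1 := by linarith
  have hp2p : (0:ℝ) < p + 2 := by linarith
  have hMm : (0:ℝ) < M - m := by linarith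
  rw [habs]
  constructor
  · -- first inequality
    have MA := mainA a b p ha0 hab hp1 hp2
    rw [hba] at MA
    have hcc : m + M - (x + y) / 2 = (a + b) / 2 := by rw [ha', hb']; ring
    rw [hcc, div_le_iff₀ (by positivity : (0:ℝ) < (p + 1) * d)]
    rw [div_le_iff₀ hp1p] at MA
    have h2p : (0:ℝ) < 2 ^ p := Real.rpow_pos_of_pos two_pos p
    have heq1 : (d / 2) ^ (p + 1) = d ^ p * d / (2 ^ p * 2) := by
      rw [Real.div_rpow hd.le (by norm_num : (0:ℝ) ≤ 2),
        Real.rpow_add' hd.le (by linarith : p + 1 ≠ 0),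
        Real.rpow_add two_pos p 1, Real.rpow_one, Real.rpow_one]
    rw [heq1] at MA
    have heq4 : (d * ((a + b) / 2) ^ p + 2 * (d ^ p * d / (2 ^ p * 2)) / (p + 1)) * (p + 1)
        = ((a + b) / 2) ^ p * ((p + 1) * d) + d ^ p * d / 2 ^ p := by
      field_simp
    rw [heq4] at MA
    have heq3 : (((a + b) / 2) ^ p + 1 / (2 ^ p * (p + 1)) * d ^ p) * ((p + 1) * d)
        = ((a + b) / 2) ^ p * ((p + 1) * d) + d ^ p * d / 2 ^ p := by
      field_simp
    rw [heq3]
    linarith [MA]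
  · -- second inequality
    have MB := mainB a b p ha0 hab hp1 hp2
    rw [hba] at MB
    -- Mercer pointwise at x and y
    have Mx := mercer_pt hp1 hp2 hm hmM hxm hxM
    have My := mercer_pt hp1 hp2 hm hmM hym hyM
    rw [← hb'] at Mx
    rw [← ha'] at My
    have hβx' : (M - m) * βp x = (M - x) * (x - m) * ((M - x) ^ (p - 1) + (x - m) ^ (p - 1)) := by
      rw [hβx]; field_simp
    have hβy' : (M - m) * βp y = (M - y) * (y - m) * ((M - y) ^ (p - 1) + (y - m) ^ (p - 1)) := by
      rw [hβy]; field_simp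
    have hx2 : m ^ p + M ^ p ≤ x ^ p + b ^ p + 2 * βp x := by
      have h2 : (M - m) * (m ^ p + M ^ p) ≤ (M - m) * (x ^ p + b ^ p + 2 * βp x) := by
        linarith [Mx, hβx']
      exact le_of_mul_le_mul_left h2 hMm
    have hy2 : m ^ p + M ^ p ≤ y ^ p + a ^ p + 2 * βp y := by
      have h2 : (M - m) * (m ^ p + M ^ p) ≤ (M - m) * (y ^ p + a ^ p + 2 * βp y) := by
        linarith [My, hβy']
      exact le_of_mul_le_mul_left h2 hMm
    have hK : 2 * (m ^ p + M ^ p - (x ^ p + y ^ p) / 2 - (βp x + βp y)) ≤ a ^ p + b ^ p := by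
      linarith
    rw [le_div_iff₀ (by positivity : (0:ℝ) < (p + 1) * d)]
    have hdp2 : d ^ (p + 2) = d ^ p * d * d := by
      rw [show p + 2 = p + 1 + 1 by ring, Real.rpow_add hd (p + 1) 1,
        Real.rpow_add hd p 1, Real.rpow_one]
    rw [hdp2] at MB
    -- MB : (a^p + b^p) * d^2 / 2 ≤ d * ((b^(p+1) - a^(p+1))/(p+1)) + 2 * (d^p*d*d/((p+1)*(p+2)))
    set N := b ^ (p + 1) - a ^ (p + 1) with hN'
    set K := m ^ p + M ^ p - (x ^ p + y ^ p) / 2 - (βp x + βp y) with hK'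
    clear_value N K
    have step : K * d * d ≤ d * (N / (p + 1)) + 2 * (d ^ p * d * d / ((p + 1) * (p + 2))) := by
      have hnn : 0 ≤ (a ^ p + b ^ p - 2 * K) * d * d :=
        mul_nonneg (mul_nonneg (by rw [hK']; linarith) hd.le) hd.le
      linarith [MB, hnn]
    have hcomb : d * (N / (p + 1)) + 2 * (d ^ p * d * d / ((p + 1) * (p + 2)))
        = (d * N * (p + 2) + 2 * (d ^ p * d * d)) / ((p + 1) * (p + 2)) := by
      field_simp
    rw [hcomb, le_div_iff₀ (by positivity : (0:ℝ) < (p + 1) * (p + 2))] at step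
    rw [← mul_le_mul_iff_of_pos_right (show (0:ℝ) < (p + 2) * d from mul_pos hp2p hd)]
    have hgl : (K - 2 * d ^ p / ((p + 1) * (p + 2))) * ((p + 1) * d) * ((p + 2) * d)
        = K * d * d * ((p + 1) * (p + 2)) - 2 * (d ^ p * d * d) := by
      field_simp
    calc (K - 2 * d ^ p / ((p + 1) * (p + 2))) * ((p + 1) * d) * ((p + 2) * d)
        = K * d * d * ((p + 1) * (p + 2)) - 2 * (d ^ p * d * d) := hgl
      _ ≤ d * N * (p + 2) + 2 * (d ^ p * d * d) - 2 * (d ^ p * d * d) := by linarith [step]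
      _ = N * ((p + 2) * d) := by ring
end

section
/- Let f : [0,∞) → ℝ be a superquadratic function. Then for all x, y > 0: f(x) + f(y) ≤ f(x+y) − 2·(y·f(x) + x·f(y))/(x+y). -/
theorem superquadratic_superadditive_refinement
    (f : ℝ → ℝ) (hf : Superquadratic f)
    (x y : ℝ) (hx : 0 < x) (hy : 0 < y) :
    f x + f y ≤ f (x + y) - 2 * (y * f x + x * f y) / (x + y) := by
  have hs : (0:ℝ) < x + y := by linarith
  -- f 0 ≤ 0
  obtain ⟨C0, hC0⟩ := hf 0 le_rfl
  have h00 := hC0 0 le_rfl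
  simp at h00
  -- constants at x and y
  obtain ⟨Cx, hCx⟩ := hf x hx.le
  obtain ⟨Cy, hCy⟩ := hf y hy.le
  have h1 := hCx (x + y) hs.le
  have h2 := hCy (x + y) hs.le
  have h3 := hCx 0 le_rfl
  have h4 := hCy 0 le_rfl
  rw [show x + y - x = y by ring, abs_of_pos hy] at h1
  rw [show x + y - y = x by ring, abs_of_pos hx] at h2
  rw [zero_sub, abs_neg, abs_of_pos hx] at h3
  rw [zero_sub, abs_neg, abs_of_pos hy] at h4
  -- from h3: Cx * x ≥ 2 * f x ; from h4: Cy * y ≥ 2 * f y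
  have key : 2 * (y * f x + x * f y) ≤ (f (x + y) - (f x + f y)) * (x + y) := by
    nlinarith [mul_le_mul_of_nonneg_left h1 hx.le, mul_le_mul_of_nonneg_left h2 hy.le,
      mul_le_mul_of_nonneg_left h3 hy.le, mul_le_mul_of_nonneg_left h4 hx.le]
  have := (div_le_iff₀ hs).mpr key
  linarith
end

section
/- Let f : [0,∞) → ℝ be a superquadratic function with f(t) ≥ 0 for all t ≥ 0. Then f is super-additive: f(x) + f(y) ≤ f(x+y) for all x, y ≥ 0. -/
theorem superquadratic_nonneg_superadditive
    (f : ℝ → ℝ) (hf : Superquadratic f)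
    (hf_nonneg : ∀ t : ℝ, 0 ≤ t → 0 ≤ f t)
    (x y : ℝ) (hx : 0 ≤ x) (hy : 0 ≤ y) :
    f x + f y ≤ f (x + y) := by
  -- first: f 0 = 0
  have hf0 : f 0 = 0 := by
    obtain ⟨C0, h0⟩ := hf 0 le_rfl
    have := h0 0 le_rfl
    simp at this
    linarith [hf_nonneg 0 le_rfl]
  rcases eq_or_lt_of_le hx with hx0 | hx0
  · simp [← hx0, hf0]
  · obtain ⟨C, hC⟩ := hf x hx
    have h1 := hC 0 le_rfl
    rw [show |(0:ℝ) - x| = x by rw [abs_sub_comm]; simpa using abs_of_nonneg hx, hf0] at h1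
    have hCpos : 0 ≤ C := by
      nlinarith [hf_nonneg x hx]
    have h2 := hC (x + y) (by linarith)
    rw [show |x + y - x| = y by simpa using abs_of_nonneg hy] at h2
    nlinarith
end

section
/- Let f : [0,∞) → ℝ be a superquadratic function and let 0 ≤ y₁ ≤ x₁ ≤ x₂ ≤ y₂ with y₁ < y₂ and x₁ + x₂ = y₁ + y₂. Then f(x₁) + f(x₂) ≤ f(y₁) + f(y₂) − 2·((y₂−x₁)/(y₂−y₁))·f(x₁−y₁) − 2·((x₁−y₁)/(y₂−y₁))·f(x₂−y₁). -/
theorem superquadratic_majorization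
    (f : ℝ → ℝ) (hf : Superquadratic f)
    (y₁ x₁ x₂ y₂ : ℝ) (hy₁ : 0 ≤ y₁) (h₁ : y₁ ≤ x₁) (h₂ : x₁ ≤ x₂) (h₃ : x₂ ≤ y₂)
    (hy : y₁ < y₂) (hsum : x₁ + x₂ = y₁ + y₂) :
    f x₁ + f x₂ ≤ f y₁ + f y₂ - 2 * ((y₂ - x₁) / (y₂ - y₁)) * f (x₁ - y₁)
      - 2 * ((x₁ - y₁) / (y₂ - y₁)) * f (x₂ - y₁) := by
  have hd : (0:ℝ) < y₂ - y₁ := by linarith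
  have hx₁ : (0:ℝ) ≤ x₁ := le_trans hy₁ h₁
  have hx₂ : (0:ℝ) ≤ x₂ := le_trans hx₁ h₂
  have hy₂ : (0:ℝ) ≤ y₂ := le_trans hx₂ h₃
  obtain ⟨C₁, hC₁⟩ := hf x₁ hx₁
  obtain ⟨C₂, hC₂⟩ := hf x₂ hx₂
  have h11 := hC₁ y₁ hy₁
  have h12 := hC₁ y₂ hy₂
  have h21 := hC₂ y₁ hy₁
  have h22 := hC₂ y₂ hy₂
  rw [abs_of_nonpos (by linarith), neg_sub] at h11
  rw [abs_of_nonneg (by linarith)] at h12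
  rw [abs_of_nonpos (by linarith), neg_sub] at h21
  rw [abs_of_nonneg (by linarith)] at h22
  have hyx : y₂ - x₁ = x₂ - y₁ := by linarith
  have hyx2 : y₂ - x₂ = x₁ - y₁ := by linarith
  rw [hyx] at h12
  rw [hyx2] at h22
  have ha : (0:ℝ) ≤ y₂ - x₁ := by linarith
  have hb : (0:ℝ) ≤ x₁ - y₁ := by linarith
  have k1 := mul_le_mul_of_nonneg_left h11 ha
  have k2 := mul_le_mul_of_nonneg_left h12 hb
  have k3 := mul_le_mul_of_nonneg_left h21 hb
  have k4 := mul_le_mul_of_nonneg_left h22 ha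
  have key : (f x₁ + f x₂) * (y₂ - y₁) ≤ (f y₁ + f y₂) * (y₂ - y₁)
      - 2 * (y₂ - x₁) * f (x₁ - y₁) - 2 * (x₁ - y₁) * f (x₂ - y₁) := by
    have hsub : y₂ = x₁ + x₂ - y₁ := by linarith
    subst hsub
    nlinarith [k1, k2, k3, k4]
  have h2 : f x₁ + f x₂ ≤ ((f y₁ + f y₂) * (y₂ - y₁)
      - 2 * (y₂ - x₁) * f (x₁ - y₁) - 2 * (x₁ - y₁) * f (x₂ - y₁)) / (y₂ - y₁) := by
    rw [le_div_iff₀ hd]; linarith [key]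
  calc f x₁ + f x₂ ≤ _ := h2
    _ = f y₁ + f y₂ - 2 * ((y₂ - x₁) / (y₂ - y₁)) * f (x₁ - y₁)
      - 2 * ((x₁ - y₁) / (y₂ - y₁)) * f (x₂ - y₁) := by field_simp
end

section
/- Let f : [0,∞) → ℝ be a continuous superquadratic function, let 0 < m < M, and let β(t) = ((t−m)/(M−m))·f(M−t) + ((M−t)/(M−m))·f(t−m). Let H be a complex Hilbert space and let A, B, C, D be positive bounded operators on H with A + D = B + C and 0 ≤ A ≤ m·I ≤ B ≤ C ≤ M·I ≤ D (Loewner order). Let Φ : B(H) → B(H) be a unital positive linear map. Then, with operator functions formed by continuous functional calculus: f(Φ(B)) + f(Φ(C)) + β(Φ(B)) + β(Φ(C)) ≤ Φ(f(A)) + Φ(f(D)) − Φ(f(m·I − A)) − Φ(f(D − M·I)) + ((f(M−m))/(M−m))·(Φ(A − D) + (M−m)·I). -/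
section Scalar

variable {f : ℝ → ℝ} {m M : ℝ}

lemma sq_mid (hf : Superquadratic f) (hm : 0 < m) (hmM : m < M)
    {t : ℝ} (ht1 : m ≤ t) (ht2 : t ≤ M) :
    f t + ((t - m) / (M - m) * f (M - t) + (M - t) / (M - m) * f (t - m)) ≤
      (f m - (f M - f m) / (M - m) * m) + (f M - f m) / (M - m) * t := by
  have hMm : (0 : ℝ) < M - m := by linarith
  obtain ⟨Cc, hC⟩ := hf t (by linarith)
  have h1 := hC m (by linarith)
  have h2 := hC M (by linarith)
  rw [show |m - t| = t - m by rw [abs_sub_comm]; exact abs_of_nonneg (by linarith)] at h1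
  rw [show |M - t| = M - t from abs_of_nonneg (by linarith)] at h2
  have hkey : (M - m) * f t + (t - m) * f (M - t) + (M - t) * f (t - m) ≤
      (M - t) * f m + (t - m) * f M := by
    nlinarith [mul_le_mul_of_nonneg_left h1 (by linarith : (0:ℝ) ≤ M - t),
      mul_le_mul_of_nonneg_left h2 (by linarith : (0:ℝ) ≤ t - m)]
  rw [show f t + ((t - m) / (M - m) * f (M - t) + (M - t) / (M - m) * f (t - m)) =
      ((M - m) * f t + (t - m) * f (M - t) + (M - t) * f (t - m)) / (M - m) by
    field_simp; ring,
    show (f m - (f M - f m) / (M - m) * m) + (f M - f m) / (M - m) * t =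
      ((M - t) * f m + (t - m) * f M) / (M - m) by field_simp; ring]
  gcongr

lemma sq_left (hf : Superquadratic f) (hm : 0 < m) (hmM : m < M)
    {a : ℝ} (ha0 : 0 ≤ a) (ham : a ≤ m) :
    (f m - ((f M - f m) / (M - m) - f (M - m) / (M - m)) * m) +
        ((f M - f m) / (M - m) - f (M - m) / (M - m)) * a ≤ f a - f (m - a) := by
  have hMm : (0 : ℝ) < M - m := by linarith
  obtain ⟨Cc, hC⟩ := hf m hm.le
  have h1 := hC a ha0
  have h2 := hC M (by linarith)
  rw [show |a - m| = m - a by rw [abs_sub_comm]; exact abs_of_nonneg (by linarith)] at h1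
  rw [show |M - m| = M - m from abs_of_nonneg (by linarith)] at h2
  have hkey : (M - m) * f m + (f M - f m - f (M - m)) * (a - m) ≤
      (M - m) * (f a - f (m - a)) := by
    nlinarith [mul_le_mul_of_nonneg_left h1 hMm.le,
      mul_le_mul_of_nonneg_left h2 (by linarith : (0:ℝ) ≤ m - a)]
  rw [show (f m - ((f M - f m) / (M - m) - f (M - m) / (M - m)) * m) +
        ((f M - f m) / (M - m) - f (M - m) / (M - m)) * a =
      ((M - m) * f m + (f M - f m - f (M - m)) * (a - m)) / (M - m) by field_simp; ring,
    show f a - f (m - a) = ((M - m) * (f a - f (m - a))) / (M - m) by field_simp]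
  gcongr

lemma sq_right (hf : Superquadratic f) (hm : 0 < m) (hmM : m < M)
    {d : ℝ} (hd : M ≤ d) :
    (f m - (f M - f m) / (M - m) * m - f (M - m) / (M - m) * M) +
        ((f M - f m) / (M - m) + f (M - m) / (M - m)) * d ≤ f d - f (d - M) := by
  have hMm : (0 : ℝ) < M - m := by linarith
  obtain ⟨Cc, hC⟩ := hf M (by linarith)
  have h1 := hC d (by linarith)
  have h2 := hC m (by linarith)
  rw [show |d - M| = d - M from abs_of_nonneg (by linarith)] at h1
  rw [show |m - M| = M - m by rw [abs_sub_comm]; exact abs_of_nonneg (by linarith)] at h2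
  have hkey : (M - m) * f m + (f M - f m) * (d - m) + f (M - m) * (d - M) ≤
      (M - m) * (f d - f (d - M)) := by
    nlinarith [mul_le_mul_of_nonneg_left h1 hMm.le,
      mul_le_mul_of_nonneg_left h2 (by linarith : (0:ℝ) ≤ d - M)]
  rw [show (f m - (f M - f m) / (M - m) * m - f (M - m) / (M - m) * M) +
        ((f M - f m) / (M - m) + f (M - m) / (M - m)) * d =
      ((M - m) * f m + (f M - f m) * (d - m) + f (M - m) * (d - M)) / (M - m) by
    field_simp; ring,
    show f d - f (d - M) = ((M - m) * (f d - f (d - M))) / (M - m) by field_simp]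
  gcongr

end Scalar
section Op

lemma cfc_affine {A : Type*} [TopologicalSpace A] [Ring A] [StarRing A] [Algebra ℝ A]
    [ContinuousFunctionalCalculus ℝ A (IsSelfAdjoint : A → Prop)]
    (c k : ℝ) (a : A) (ha : IsSelfAdjoint a) :
    cfc (fun t : ℝ => c + k * t) a = c • (1 : A) + k • a := by
  rw [cfc_add a (fun _ => c) (fun t => k * t) (by fun_prop) (by fun_prop),
    cfc_const c a ha, cfc_const_mul k (fun t : ℝ => t) a (by fun_prop),
    cfc_id' ℝ a ha, Algebra.algebraMap_eq_smul_one]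

end Op

set_option maxHeartbeats 2000000 in
theorem operator_mercer_superquadratic
    {H : Type*} [NormedAddCommGroup H] [InnerProductSpace ℂ H] [CompleteSpace H]
    (f : ℝ → ℝ) (hf_cont : Continuous f) (hf : Superquadratic f)
    (m M : ℝ) (hm : 0 < m) (hmM : m < M)
    (β : ℝ → ℝ)
    (hβ : ∀ t : ℝ,
      β t = (t - m) / (M - m) * f (M - t) + (M - t) / (M - m) * f (t - m))
    (A B C D : H →L[ℂ] H)
    (hA : 0 ≤ A) (hAmI : A ≤ m • 1) (hmIB : m • (1 : H →L[ℂ] H) ≤ B)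
    (hBC : B ≤ C) (hCMI : C ≤ M • 1) (hMID : M • (1 : H →L[ℂ] H) ≤ D)
    (hsum : A + D = B + C)
    (Φ : (H →L[ℂ] H) →ₗ[ℂ] (H →L[ℂ] H))
    (hΦ_unital : Φ 1 = 1) (hΦ_pos : ∀ X : H →L[ℂ] H, 0 ≤ X → 0 ≤ Φ X) :
    cfc f (Φ B) + cfc f (Φ C) + cfc β (Φ B) + cfc β (Φ C) ≤
      Φ (cfc f A) + Φ (cfc f D) - Φ (cfc f (m • 1 - A)) - Φ (cfc f (D - M • 1))
        + (f (M - m) / (M - m)) • (Φ (A - D) + (M - m) • 1) := by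
  rw [map_sub Φ A D]
  have hMm : (0 : ℝ) < M - m := by linarith
  set k : ℝ := (f M - f m) / (M - m) with hk
  set γ : ℝ := f (M - m) / (M - m) with hγdef
  have hβfun : β = fun t => (t - m) / (M - m) * f (M - t) + (M - t) / (M - m) * f (t - m) :=
    funext hβ
  have hβcont : Continuous β := by rw [hβfun]; fun_prop
  -- Φ facts
  have hΦmono : ∀ {X Y : H →L[ℂ] H}, X ≤ Y → Φ X ≤ Φ Y := by
    intro X Y h
    have h2 := hΦ_pos _ (sub_nonneg.mpr h)
    rw [map_sub] at h2
    exact sub_nonneg.mp h2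
  have hΦsmul : ∀ (r : ℝ) (X : H →L[ℂ] H), Φ (r • X) = r • Φ X := fun r X =>
    Φ.map_smul_of_tower r X
  have hΦone : ∀ r : ℝ, Φ (r • 1) = r • (1 : H →L[ℂ] H) := fun r => by
    rw [hΦsmul, hΦ_unital]
  -- selfadjointness
  have hsa1 : ∀ r : ℝ, IsSelfAdjoint (r • (1 : H →L[ℂ] H)) := fun r => by
    rw [← Algebra.algebraMap_eq_smul_one]
    exact IsSelfAdjoint.algebraMap _ (star_trivial r)
  have hsaOf : ∀ {X : H →L[ℂ] H} {r : ℝ}, r • (1 : H →L[ℂ] H) ≤ X → IsSelfAdjoint X := by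
    intro X r h
    have h1 : IsSelfAdjoint (X - r • (1 : H →L[ℂ] H)) := .of_nonneg (sub_nonneg.mpr h)
    simpa using h1.add (hsa1 r)
  have hsaA : IsSelfAdjoint A := .of_nonneg hA
  have hsaD : IsSelfAdjoint D := hsaOf hMID
  -- bounds for Φ B, Φ C
  have hΦB1 : m • (1 : H →L[ℂ] H) ≤ Φ B := by have h := hΦmono hmIB; rwa [hΦone] at h
  have hΦB2 : Φ B ≤ M • (1 : H →L[ℂ] H) := by
    have h := hΦmono (hBC.trans hCMI); rwa [hΦone] at h
  have hΦC1 : m • (1 : H →L[ℂ] H) ≤ Φ C := by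
    have h := hΦmono (hmIB.trans hBC); rwa [hΦone] at h
  have hΦC2 : Φ C ≤ M • (1 : H →L[ℂ] H) := by have h := hΦmono hCMI; rwa [hΦone] at h
  -- spectra
  have hspec : ∀ (X : H →L[ℂ] H), IsSelfAdjoint X → m • (1 : H →L[ℂ] H) ≤ X →
      X ≤ M • 1 → ∀ x ∈ spectrum ℝ X, m ≤ x ∧ x ≤ M := by
    intro X hX h1 h2 x hx
    constructor
    · exact (algebraMap_le_iff_le_spectrum hX).mp
        (by rwa [Algebra.algebraMap_eq_smul_one]) x hx
    · exact (le_algebraMap_iff_spectrum_le hX).mp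
        (by rwa [Algebra.algebraMap_eq_smul_one]) x hx
  have specA : ∀ x ∈ spectrum ℝ A, 0 ≤ x ∧ x ≤ m := by
    intro x hx
    constructor
    · exact (algebraMap_le_iff_le_spectrum hsaA).mp (by simpa using hA) x hx
    · exact (le_algebraMap_iff_spectrum_le hsaA).mp
        (by rwa [Algebra.algebraMap_eq_smul_one]) x hx
  have specD : ∀ x ∈ spectrum ℝ D, M ≤ x := fun x hx =>
    (algebraMap_le_iff_le_spectrum hsaD).mp (by rwa [Algebra.algebraMap_eq_smul_one]) x hx
  -- middle inequality for Φ B and Φ C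
  have hmid : ∀ (X : H →L[ℂ] H), m • (1 : H →L[ℂ] H) ≤ X → X ≤ M • 1 →
      cfc f X + cfc β X ≤ (f m - k * m) • 1 + k • X := by
    intro X h1 h2
    have hX : IsSelfAdjoint X := hsaOf h1
    have hsp := hspec X hX h1 h2
    rw [← cfc_add X f β (by fun_prop) (by fun_prop), ← cfc_affine _ _ X hX]
    refine (cfc_le_iff _ _ X (by fun_prop) (by fun_prop) hX).mpr fun x hx => ?_
    have h := sq_mid hf hm hmM (hsp x hx).1 (hsp x hx).2
    rw [hβfun, hk]
    exact h
  -- A-side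
  have hAside : (f m - (k - γ) * m) • (1 : H →L[ℂ] H) + (k - γ) • Φ A ≤
      Φ (cfc f A) - Φ (cfc f (m • 1 - A)) := by
    have e1 : m • (1 : H →L[ℂ] H) - A = cfc (fun x : ℝ => m - x) A := by
      rw [cfc_sub (fun _ => m) (fun x : ℝ => x) A (by fun_prop) (by fun_prop),
        cfc_const m A hsaA, cfc_id' ℝ A hsaA, Algebra.algebraMap_eq_smul_one]
    have e2 : cfc f (m • 1 - A) = cfc (fun x : ℝ => f (m - x)) A := by
      rw [e1, ← cfc_comp' f (fun x : ℝ => m - x) A (by fun_prop) (by fun_prop) hsaA]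
    have key : (f m - (k - γ) * m) • (1 : H →L[ℂ] H) + (k - γ) • A ≤
        cfc f A - cfc f (m • 1 - A) := by
      rw [e2, ← cfc_sub f (fun x : ℝ => f (m - x)) A (by fun_prop) (by fun_prop),
        ← cfc_affine (f m - (k - γ) * m) (k - γ) A hsaA]
      refine (cfc_le_iff _ _ A (by fun_prop) (by fun_prop) hsaA).mpr fun x hx => ?_
      have h := sq_left hf hm hmM (specA x hx).1 (specA x hx).2
      rw [hk, hγdef]
      exact h
    have h := hΦmono key
    rwa [map_sub, map_add, hΦone, hΦsmul] at h
  -- D-side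
  have hDside : (f m - k * m - γ * M) • (1 : H →L[ℂ] H) + (k + γ) • Φ D ≤
      Φ (cfc f D) - Φ (cfc f (D - M • 1)) := by
    have e1 : D - M • (1 : H →L[ℂ] H) = cfc (fun x : ℝ => x - M) D := by
      rw [cfc_sub (fun x : ℝ => x) (fun _ => M) D (by fun_prop) (by fun_prop),
        cfc_const M D hsaD, cfc_id' ℝ D hsaD, Algebra.algebraMap_eq_smul_one]
    have e2 : cfc f (D - M • 1) = cfc (fun x : ℝ => f (x - M)) D := by
      rw [e1, ← cfc_comp' f (fun x : ℝ => x - M) D (by fun_prop) (by fun_prop) hsaD]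
    have key : (f m - k * m - γ * M) • (1 : H →L[ℂ] H) + (k + γ) • D ≤
        cfc f D - cfc f (D - M • 1) := by
      rw [e2, ← cfc_sub f (fun x : ℝ => f (x - M)) D (by fun_prop) (by fun_prop),
        ← cfc_affine (f m - k * m - γ * M) (k + γ) D hsaD]
      refine (cfc_le_iff _ _ D (by fun_prop) (by fun_prop) hsaD).mpr fun x hx => ?_
      have h := sq_right hf hm hmM (specD x hx)
      rw [hk, hγdef]
      exact h
    have h := hΦmono key
    rwa [map_sub, map_add, hΦone, hΦsmul] at h
  -- assembly
  have hΦBC : Φ A + Φ D = Φ B + Φ C := by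
    rw [← map_add, ← map_add, hsum]
  have hB' : Φ B = Φ A + Φ D - Φ C := by rw [hΦBC]; abel
  calc cfc f (Φ B) + cfc f (Φ C) + cfc β (Φ B) + cfc β (Φ C)
      = (cfc f (Φ B) + cfc β (Φ B)) + (cfc f (Φ C) + cfc β (Φ C)) := by abel
    _ ≤ ((f m - k * m) • 1 + k • Φ B) + ((f m - k * m) • 1 + k • Φ C) :=
        add_le_add (hmid _ hΦB1 hΦB2) (hmid _ hΦC1 hΦC2)
    _ = ((f m - (k - γ) * m) • 1 + (k - γ) • Φ A)
          + ((f m - k * m - γ * M) • 1 + (k + γ) • Φ D)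
          + γ • (Φ A - Φ D + (M - m) • 1) := by rw [hB']; module
    _ ≤ (Φ (cfc f A) - Φ (cfc f (m • 1 - A)))
          + (Φ (cfc f D) - Φ (cfc f (D - M • 1)))
          + γ • (Φ A - Φ D + (M - m) • 1) :=
        add_le_add (add_le_add hAside hDside) le_rfl
    _ = Φ (cfc f A) + Φ (cfc f D) - Φ (cfc f (m • 1 - A)) - Φ (cfc f (D - M • 1))
          + γ • (Φ A - Φ D + (M - m) • 1) := by abel
end

section
/- Let f : [0,∞) → ℝ be a continuous superquadratic function, let 0 < m < M, and let β(t) = ((t−m)/(M−m))·f(M−t) + ((M−t)/(M−m))·f(t−m). Let H be a complex Hilbert space and let A, B, C, D be positive bounded operators on H with A + D = B + C and 0 ≤ A ≤ m·I ≤ B ≤ C ≤ M·I ≤ D (Loewner order). Let Φ : B(H) → B(H) be a unital positive linear map. Then: Φ(f(B)) + f(Φ(C)) + Φ(β(B)) + β(Φ(C)) ≤ Φ(f(A)) + f(Φ(D)) − Φ(f(m·I − A)) − f(Φ(D) − M·I) + ((f(M−m))/(M−m))·(Φ(A − D) + (M−m)·I). -/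
set_option maxHeartbeats 2000000

theorem operator_mercer_superquadratic_variant
    {H : Type*} [NormedAddCommGroup H] [InnerProductSpace ℂ H] [CompleteSpace H]
    (f : ℝ → ℝ) (hf_cont : Continuous f) (hf : Superquadratic f)
    (m M : ℝ) (hm : 0 < m) (hmM : m < M)
    (β : ℝ → ℝ)
    (hβ : ∀ t : ℝ,
      β t = (t - m) / (M - m) * f (M - t) + (M - t) / (M - m) * f (t - m))
    (A B C D : H →L[ℂ] H)
    (hA : 0 ≤ A) (hAmI : A ≤ m • 1) (hmIB : m • (1 : H →L[ℂ] H) ≤ B)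
    (hBC : B ≤ C) (hCMI : C ≤ M • 1) (hMID : M • (1 : H →L[ℂ] H) ≤ D)
    (hsum : A + D = B + C)
    (Φ : (H →L[ℂ] H) →ₗ[ℂ] (H →L[ℂ] H))
    (hΦ_unital : Φ 1 = 1) (hΦ_pos : ∀ X : H →L[ℂ] H, 0 ≤ X → 0 ≤ Φ X) :
    Φ (cfc f B) + cfc f (Φ C) + Φ (cfc β B) + cfc β (Φ C) ≤
      Φ (cfc f A) + cfc f (Φ D) - Φ (cfc f (m • 1 - A)) - cfc f (Φ D - M • 1)
        + (f (M - m) / (M - m)) • (Φ (A - D) + (M - m) • 1) := by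
  have hMm : (0:ℝ) < M - m := by linarith
  obtain ⟨Cm, hCm⟩ := hf m hm.le
  obtain ⟨CM, hCM⟩ := hf M (hm.trans hmM).le
  set α := (f M - f m) / (M - m) with hα
  set γ := (M * f m - m * f M) / (M - m) with hγ
  set k := f (M - m) / (M - m) with hk
  -- scalar facts
  have hCm' : Cm ≤ α - k := by
    have h := hCm M (hm.trans hmM).le
    rw [abs_of_nonneg hMm.le] at h
    rw [hα, hk, div_sub_div_same, le_div_iff₀ hMm]
    linarith
  have hCM' : α + k ≤ CM := by
    have h := hCM m hm.le
    rw [show |m - M| = M - m by rw [abs_of_nonpos (by linarith)]; ring] at h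
    rw [hα, hk, ← add_div, div_le_iff₀ hMm]
    linarith
  have em : α * m + γ = f m := by rw [hα, hγ]; field_simp; ring
  have eM : α * M + γ = f M := by rw [hα, hγ]; field_simp; ring
  have jensen : ∀ t : ℝ, m ≤ t → t ≤ M → f t + β t ≤ α * t + γ := by
    intro t htm htM
    obtain ⟨Ct, hCt⟩ := hf t (hm.le.trans htm)
    have h1 := hCt m hm.le
    have h2 := hCt M (hm.trans hmM).le
    rw [show |m - t| = t - m by rw [abs_of_nonpos (by linarith)]; ring] at h1
    rw [abs_of_nonneg (by linarith : (0:ℝ) ≤ M - t)] at h2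
    have e1 := mul_le_mul_of_nonneg_left h1 (by linarith : (0:ℝ) ≤ M - t)
    have e2 := mul_le_mul_of_nonneg_left h2 (by linarith : (0:ℝ) ≤ t - m)
    have key : (M - m) * f t + ((t - m) * f (M - t) + (M - t) * f (t - m)) ≤
        (M - t) * f m + (t - m) * f M := by nlinarith [e1, e2]
    have goal_eq : α * t + γ = ((M - t) * f m + (t - m) * f M) / (M - m) := by
      rw [hα, hγ]; field_simp; ring
    rw [goal_eq, hβ t, le_div_iff₀ hMm]
    have expand : (f t + ((t - m) / (M - m) * f (M - t) + (M - t) / (M - m) * f (t - m)))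
        * (M - m) = (M - m) * f t + ((t - m) * f (M - t) + (M - t) * f (t - m)) := by
      field_simp
    rw [expand]; exact key
  -- basic operator facts
  have hβc : Continuous β := by
    have hβe : β = fun t => (t - m) / (M - m) * f (M - t) + (M - t) / (M - m) * f (t - m) :=
      funext hβ
    rw [hβe]; fun_prop
  have h1pos : (0 : H →L[ℂ] H) ≤ 1 := by
    simpa using star_mul_self_nonneg (1 : H →L[ℂ] H)
  have hsmul_nonneg : ∀ (r : ℝ) (X : H →L[ℂ] H), 0 ≤ r → 0 ≤ X → 0 ≤ r • X := by
    intro r X hr hX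
    rw [← cfc_const_mul_id r X hX.isSelfAdjoint]
    exact cfc_nonneg fun x hx => mul_nonneg hr (spectrum_nonneg_of_nonneg hX hx)
  have hm1 : (0 : H →L[ℂ] H) ≤ m • 1 := hsmul_nonneg m 1 hm.le h1pos
  have hM1 : (0 : H →L[ℂ] H) ≤ M • 1 := hsmul_nonneg M 1 (hm.trans hmM).le h1pos
  have sA : IsSelfAdjoint A := hA.isSelfAdjoint
  have sB : IsSelfAdjoint B := (hm1.trans hmIB).isSelfAdjoint
  have hΦmono : ∀ X Y : H →L[ℂ] H, X ≤ Y → Φ X ≤ Φ Y := by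
    intro X Y h
    have h2 := hΦ_pos (Y - X) (sub_nonneg.mpr h)
    rw [map_sub] at h2
    exact sub_nonneg.mp h2
  have hΦsmul : ∀ (r : ℝ) (X : H →L[ℂ] H), Φ (r • X) = r • Φ X := by
    intro r X
    rw [← algebraMap_smul ℂ r X, map_smul, algebraMap_smul]
  have hΦC_lb : m • (1 : H →L[ℂ] H) ≤ Φ C := by
    have h := hΦmono _ _ (hmIB.trans hBC)
    rwa [hΦsmul, hΦ_unital] at h
  have hΦC_ub : Φ C ≤ M • 1 := by
    have h := hΦmono _ _ hCMI
    rwa [hΦsmul, hΦ_unital] at h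
  have hΦD_lb : M • (1 : H →L[ℂ] H) ≤ Φ D := by
    have h := hΦmono _ _ hMID
    rwa [hΦsmul, hΦ_unital] at h
  have hΦA_ub : Φ A ≤ m • 1 := by
    have h := hΦmono _ _ hAmI
    rwa [hΦsmul, hΦ_unital] at h
  have sC' : IsSelfAdjoint (Φ C) := (hm1.trans hΦC_lb).isSelfAdjoint
  have sD' : IsSelfAdjoint (Φ D) := (hM1.trans hΦD_lb).isSelfAdjoint
  -- spectral bounds
  have spec_ub : ∀ (X : H →L[ℂ] H) (r : ℝ), IsSelfAdjoint X → X ≤ r • 1 →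
      ∀ x ∈ spectrum ℝ X, x ≤ r := fun X r hX h =>
    (le_algebraMap_iff_spectrum_le (a := X) hX).mp
      (by rwa [Algebra.algebraMap_eq_smul_one])
  have spec_lb : ∀ (X : H →L[ℂ] H) (r : ℝ), IsSelfAdjoint X → r • 1 ≤ X →
      ∀ x ∈ spectrum ℝ X, r ≤ x := fun X r hX h =>
    (algebraMap_le_iff_le_spectrum (a := X) hX).mp
      (by rwa [Algebra.algebraMap_eq_smul_one])
  -- cfc helpers
  have cfc_affine : ∀ (a b : ℝ) (X : H →L[ℂ] H), IsSelfAdjoint X →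
      cfc (fun t : ℝ => a * t + b) X = a • X + b • 1 := by
    intro a b X hX
    rw [cfc_add X (fun t : ℝ => a * t) (fun _ : ℝ => b) (by fun_prop) (by fun_prop),
      cfc_const_mul_id a X hX, cfc_const b X hX, Algebra.algebraMap_eq_smul_one]
  have comp_sub : ∀ (c : ℝ) (X : H →L[ℂ] H), IsSelfAdjoint X →
      cfc (fun t : ℝ => f (t - c)) X = cfc f (X - c • 1) := by
    intro c X hX
    have h1 : cfc (fun t : ℝ => t - c) X = X - c • 1 := by
      rw [cfc_sub (fun t : ℝ => t) (fun _ : ℝ => c) X, cfc_id' ℝ X, cfc_const c X hX,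
        Algebra.algebraMap_eq_smul_one]
    conv_rhs => rw [← h1]
    exact cfc_comp' f (fun t : ℝ => t - c) X hf_cont.continuousOn (by fun_prop)
  have comp_const_sub : ∀ (c : ℝ) (X : H →L[ℂ] H), IsSelfAdjoint X →
      cfc (fun t : ℝ => f (c - t)) X = cfc f (c • 1 - X) := by
    intro c X hX
    have h1 : cfc (fun t : ℝ => c - t) X = c • 1 - X := by
      rw [cfc_sub (fun _ : ℝ => c) (fun t : ℝ => t) X, cfc_id' ℝ X, cfc_const c X hX,
        Algebra.algebraMap_eq_smul_one]
    conv_rhs => rw [← h1]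
    exact cfc_comp' f (fun t : ℝ => c - t) X hf_cont.continuousOn (by fun_prop)
  -- operator Jensen inequality
  have opJ : ∀ X : H →L[ℂ] H, IsSelfAdjoint X → m • 1 ≤ X → X ≤ M • (1 : H →L[ℂ] H) →
      cfc f X + cfc β X ≤ α • X + γ • 1 := by
    intro X hX hl hu
    have hpt : ∀ x ∈ spectrum ℝ X, f x + β x ≤ α * x + γ := fun x hx =>
      jensen x (spec_lb X m hX hl x hx) (spec_ub X M hX hu x hx)
    have h := cfc_mono (f := fun x : ℝ => f x + β x) (g := fun x : ℝ => α * x + γ) hpt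
      ((hf_cont.add hβc).continuousOn) (by fun_prop)
    rwa [cfc_add X f β hf_cont.continuousOn hβc.continuousOn, cfc_affine α γ X hX] at h
  -- step 1 : B
  have step1 : Φ (cfc f B) + Φ (cfc β B) ≤ α • Φ B + γ • 1 := by
    have h := hΦmono _ _ (opJ B sB hmIB (hBC.trans hCMI))
    simpa only [map_add, hΦsmul, hΦ_unital] using h
  -- step 2 : Φ C
  have step2 : cfc f (Φ C) + cfc β (Φ C) ≤ α • Φ C + γ • 1 := opJ (Φ C) sC' hΦC_lb hΦC_ub
  -- step A
  have stepA : f m • (1 : H →L[ℂ] H) + Cm • (A - m • 1) + cfc f (m • 1 - A) ≤ cfc f A := by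
    have hpt : ∀ x ∈ spectrum ℝ A, (Cm * x + (f m - Cm * m)) + f (m - x) ≤ f x := by
      intro x hx
      have hx0 : 0 ≤ x := spectrum_nonneg_of_nonneg hA hx
      have hxm : x ≤ m := spec_ub A m sA hAmI x hx
      have h := hCm x hx0
      rw [show |x - m| = m - x by rw [abs_of_nonpos (by linarith)]; ring] at h
      linarith
    have h := cfc_mono (f := fun x : ℝ => (Cm * x + (f m - Cm * m)) + f (m - x)) (g := f)
      hpt (by fun_prop) hf_cont.continuousOn
    rw [cfc_add A (fun x : ℝ => Cm * x + (f m - Cm * m)) (fun x : ℝ => f (m - x))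
        (by fun_prop) (by fun_prop), cfc_affine Cm (f m - Cm * m) A sA,
      comp_const_sub m A sA] at h
    refine le_trans (le_of_eq ?_) h
    module
  have stepA' : f m • (1 : H →L[ℂ] H) + Cm • (Φ A - m • 1) + Φ (cfc f (m • 1 - A))
      ≤ Φ (cfc f A) := by
    have h := hΦmono _ _ stepA
    simpa only [map_add, map_sub, hΦsmul, hΦ_unital] using h
  -- step D
  have stepD : f M • (1 : H →L[ℂ] H) + CM • (Φ D - M • 1) + cfc f (Φ D - M • 1)
      ≤ cfc f (Φ D) := by
    have hpt : ∀ x ∈ spectrum ℝ (Φ D), (CM * x + (f M - CM * M)) + f (x - M) ≤ f x := by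
      intro x hx
      have hMx : M ≤ x := spec_lb (Φ D) M sD' hΦD_lb x hx
      have h := hCM x ((hm.trans hmM).le.trans hMx)
      rw [abs_of_nonneg (by linarith)] at h
      linarith
    have h := cfc_mono (f := fun x : ℝ => (CM * x + (f M - CM * M)) + f (x - M)) (g := f)
      hpt (by fun_prop) hf_cont.continuousOn
    rw [cfc_add (Φ D) (fun x : ℝ => CM * x + (f M - CM * M)) (fun x : ℝ => f (x - M))
        (by fun_prop) (by fun_prop), cfc_affine CM (f M - CM * M) (Φ D) sD',
      comp_sub M (Φ D) sD'] at h
    refine le_trans (le_of_eq ?_) h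
    module
  rw [← em] at stepA'
  rw [← eM] at stepD
  -- combine
  have hBCAD : Φ B + Φ C = Φ A + Φ D := by rw [← map_add, ← map_add, hsum]
  have key1 : Φ (cfc f B) + cfc f (Φ C) + Φ (cfc β B) + cfc β (Φ C)
      ≤ α • Φ A + α • Φ D + γ • 1 + γ • 1 :=
    calc Φ (cfc f B) + cfc f (Φ C) + Φ (cfc β B) + cfc β (Φ C)
        = (Φ (cfc f B) + Φ (cfc β B)) + (cfc f (Φ C) + cfc β (Φ C)) := by abel
      _ ≤ (α • Φ B + γ • 1) + (α • Φ C + γ • 1) := add_le_add step1 step2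
      _ = α • (Φ B + Φ C) + γ • 1 + γ • 1 := by module
      _ = α • (Φ A + Φ D) + γ • 1 + γ • 1 := by rw [hBCAD]
      _ = α • Φ A + α • Φ D + γ • 1 + γ • 1 := by module
  have h7 : (0 : H →L[ℂ] H) ≤ (α - k - Cm) • (m • 1 - Φ A) :=
    hsmul_nonneg _ _ (by linarith) (sub_nonneg.mpr hΦA_ub)
  have h8 : (0 : H →L[ℂ] H) ≤ (CM - k - α) • (Φ D - M • 1) :=
    hsmul_nonneg _ _ (by linarith) (sub_nonneg.mpr hΦD_lb)
  have key2 : α • Φ A + α • Φ D + γ • 1 + γ • 1 ≤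
      Φ (cfc f A) + cfc f (Φ D) - Φ (cfc f (m • 1 - A)) - cfc f (Φ D - M • 1)
        + k • (Φ (A - D) + (M - m) • 1) := by
    rw [← sub_nonneg]
    have hADm : Φ (A - D) = Φ A - Φ D := map_sub Φ A D
    have keyeq : Φ (cfc f A) + cfc f (Φ D) - Φ (cfc f (m • 1 - A)) - cfc f (Φ D - M • 1)
          + k • (Φ (A - D) + (M - m) • 1) - (α • Φ A + α • Φ D + γ • 1 + γ • 1)
        = (Φ (cfc f A) - ((α * m + γ) • 1 + Cm • (Φ A - m • 1) + Φ (cfc f (m • 1 - A))))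
          + (cfc f (Φ D) - ((α * M + γ) • 1 + CM • (Φ D - M • 1) + cfc f (Φ D - M • 1)))
          + ((α - k - Cm) • (m • 1 - Φ A) + (CM - k - α) • (Φ D - M • 1)) := by
      rw [hADm]; module
    rw [keyeq]
    exact add_nonneg (add_nonneg (sub_nonneg.mpr stepA') (sub_nonneg.mpr stepD))
      (add_nonneg h7 h8)
  exact key1.trans key2
end

section
/- Let 0 ≤ m < M, let f : [0,∞) → ℝ be a superquadratic function, and let β(t) = ((t−m)/(M−m))·f(M−t) + ((M−t)/(M−m))·f(t−m). Then for every x ∈ [m,M]: f(M + m − x) ≤ f(m) + f(M) − f(x) − 2β(x). -/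
theorem mercer_pointwise_superquadratic
    (m M : ℝ) (hm : 0 ≤ m) (hmM : m < M)
    (f : ℝ → ℝ) (hf : Superquadratic f)
    (β : ℝ → ℝ)
    (hβ : ∀ t ∈ Set.Icc m M,
      β t = (t - m) / (M - m) * f (M - t) + (M - t) / (M - m) * f (t - m))
    (x : ℝ) (hx : x ∈ Set.Icc m M) :
    f (M + m - x) ≤ f m + f M - f x - 2 * β x := by
  obtain ⟨hx1, hx2⟩ := hx
  have hMm : (0:ℝ) < M - m := by linarith
  -- key scaled Jensen-type inequality
  have key : ∀ t : ℝ, m ≤ t → t ≤ M →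
      (M - m) * f t + (t - m) * f (M - t) + (M - t) * f (t - m)
        ≤ (M - t) * f m + (t - m) * f M := by
    intro t ht1 ht2
    obtain ⟨C, hC⟩ := hf t (by linarith)
    have h1 := hC m hm
    have h2 := hC M (by linarith)
    rw [abs_of_nonpos (by linarith : m - t ≤ 0), neg_sub] at h1
    rw [abs_of_nonneg (by linarith : (0:ℝ) ≤ M - t)] at h2
    have e1 := mul_le_mul_of_nonneg_left h1 (by linarith : (0:ℝ) ≤ M - t)
    have e2 := mul_le_mul_of_nonneg_left h2 (by linarith : (0:ℝ) ≤ t - m)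
    nlinarith [e1, e2]
  have key1 := key x hx1 hx2
  have key2 := key (M + m - x) (by linarith) (by linarith)
  rw [show M - (M + m - x) = x - m by ring, show M + m - x - m = M - x by ring] at key2
  have hb : (M - m) * β x = (x - m) * f (M - x) + (M - x) * f (x - m) := by
    rw [hβ x ⟨hx1, hx2⟩]
    field_simp
  have h : (M - m) * (f (M + m - x) + f x + 2 * β x) ≤ (M - m) * (f m + f M) := by
    nlinarith [key1, key2, hb]
  have := (mul_le_mul_iff_right₀ hMm).mp h
  linarith
end

section
/- Let f : [0,∞) → ℝ be a superquadratic function and let 0 ≤ m < M. Then for every s ≥ M: f(s) − f(s−M) + ((M−s)/(M−m))·f(M−m) ≥ ((M−s)/(M−m))·f(m) + ((s−m)/(M−m))·f(M). -/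
theorem superquadratic_above_M
    (f : ℝ → ℝ) (hf : Superquadratic f)
    (m M : ℝ) (hm : 0 ≤ m) (hmM : m < M)
    (s : ℝ) (hs : M ≤ s) :
    (M - s) / (M - m) * f m + (s - m) / (M - m) * f M ≤
      f s - f (s - M) + (M - s) / (M - m) * f (M - m) := by
  have hM0 : (0:ℝ) ≤ M := le_trans hm hmM.le
  obtain ⟨C, hC⟩ := hf M hM0
  have h1 := hC s (le_trans hM0 hs)
  have h2 := hC m hm
  rw [abs_of_nonneg (by linarith)] at h1
  rw [abs_of_nonpos (by linarith), neg_sub] at h2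
  have hd : (0:ℝ) < M - m := by linarith
  have key : (M - s) * f m + (s - m) * f M ≤
      (f s - f (s - M)) * (M - m) + (M - s) * f (M - m) := by
    nlinarith [mul_le_mul_of_nonneg_left h2 (sub_nonneg.2 hs)]
  rw [div_mul_eq_mul_div, div_mul_eq_mul_div, div_mul_eq_mul_div, ← add_div,
    ← sub_le_iff_le_add, ← sub_div, div_le_iff₀ hd]
  linarith
end

section
/- Let f : [0,∞) → ℝ be a superquadratic function and let 0 ≤ m < M. Then for every s with 0 ≤ s ≤ m: f(s) − f(m−s) + ((s−m)/(M−m))·f(M−m) ≥ ((M−s)/(M−m))·f(m) + ((s−m)/(M−m))·f(M). -/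
theorem superquadratic_below_m
    (f : ℝ → ℝ) (hf : Superquadratic f)
    (m M : ℝ) (hm : 0 ≤ m) (hmM : m < M)
    (s : ℝ) (hs0 : 0 ≤ s) (hsm : s ≤ m) :
    (M - s) / (M - m) * f m + (s - m) / (M - m) * f M ≤
      f s - f (m - s) + (s - m) / (M - m) * f (M - m) := by
  obtain ⟨C, hC⟩ := hf m hm
  have h1 := hC s hs0
  have h2 := hC M (by linarith)
  rw [show |s - m| = m - s by rw [abs_of_nonpos (by linarith)]; ring] at h1
  rw [show |M - m| = M - m by rw [abs_of_nonneg (by linarith)]] at h2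
  have hd : (0:ℝ) < M - m := by linarith
  rw [div_mul_eq_mul_div, div_mul_eq_mul_div, div_mul_eq_mul_div]
  rw [← add_div, div_le_iff₀ hd, add_mul, div_mul_cancel₀ _ hd.ne']
  nlinarith [mul_le_mul_of_nonpos_left h2 (show s - m ≤ 0 by linarith)]
end

section
/- Let f : [0,∞) → ℝ be a superquadratic function, let 0 ≤ m < M, and let β(t) = ((t−m)/(M−m))·f(M−t) + ((M−t)/(M−m))·f(t−m). Then for every t ∈ [m,M]: f(t) + β(t) ≤ ((M−t)/(M−m))·f(m) + ((t−m)/(M−m))·f(M). -/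
theorem superquadratic_jensen_with_beta
    (f : ℝ → ℝ) (hf : Superquadratic f)
    (m M : ℝ) (hm : 0 ≤ m) (hmM : m < M)
    (β : ℝ → ℝ)
    (hβ : ∀ t ∈ Set.Icc m M,
      β t = (t - m) / (M - m) * f (M - t) + (M - t) / (M - m) * f (t - m))
    (t : ℝ) (ht : t ∈ Set.Icc m M) :
    f t + β t ≤ (M - t) / (M - m) * f m + (t - m) / (M - m) * f M := by
  obtain ⟨htm, htM⟩ := ht
  have ht0 : 0 ≤ t := hm.trans htm
  obtain ⟨C, hC⟩ := hf t ht0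
  have h1 := hC m hm
  have h2 := hC M (hm.trans hmM.le)
  have hMm : 0 < M - m := sub_pos.mpr hmM
  have habs1 : |m - t| = t - m := by rw [abs_sub_comm]; exact abs_of_nonneg (by linarith)
  have habs2 : |M - t| = M - t := abs_of_nonneg (by linarith)
  rw [habs1] at h1
  rw [habs2] at h2
  rw [hβ t ⟨htm, htM⟩]
  have hlam : 0 ≤ (t - m) / (M - m) := div_nonneg (by linarith) hMm.le
  have hmu : 0 ≤ (M - t) / (M - m) := div_nonneg (by linarith) hMm.le
  have e1 := mul_le_mul_of_nonneg_left h1 hmu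
  have e2 := mul_le_mul_of_nonneg_left h2 hlam
  have hsum : (M - t) / (M - m) + (t - m) / (M - m) = 1 := by
    field_simp
    ring
  have hzero : (M - t) / (M - m) * (C * (m - t)) + (t - m) / (M - m) * (C * (M - t)) = 0 := by
    field_simp
    ring
  have hft : (M - t) / (M - m) * f t + (t - m) / (M - m) * f t = f t := by
    rw [← add_mul, hsum, one_mul]
  have e1' : (M - t) / (M - m) * f t + (M - t) / (M - m) * (C * (m - t))
      + (M - t) / (M - m) * f (t - m) ≤ (M - t) / (M - m) * f m := by
    nlinarith [e1]
  have e2' : (t - m) / (M - m) * f t + (t - m) / (M - m) * (C * (M - t))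
      + (t - m) / (M - m) * f (M - t) ≤ (t - m) / (M - m) * f M := by
    nlinarith [e2]
  linarith [e1', e2', hzero, hft]
end

section
/- Let f : [0,∞) → ℝ be a continuous superquadratic function and let 0 ≤ x < y. Then f((x+y)/2) ≤ (1/(y−x))·∫ₓ^y f(u) du − 2∫₀^{1/2} f(u·|x−y|) du. -/
theorem superquadratic_hermite_hadamard_left
    (f : ℝ → ℝ) (hf_cont : Continuous f) (hf : Superquadratic f)
    (x y : ℝ) (hx : 0 ≤ x) (hxy : x < y) :
    f ((x + y) / 2) ≤
      (1 / (y - x)) * (∫ u in x..y, f u) - 2 * (∫ u in (0 : ℝ)..(1 / 2), f (u * |x - y|)) := by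
  set m : ℝ := (x + y) / 2 with hm
  have hc : 0 < y - x := by linarith
  have hm0 : 0 ≤ m := by simp only [hm]; linarith
  have hxm : x ≤ m := by simp only [hm]; linarith
  have hmy : m ≤ y := by simp only [hm]; linarith
  obtain ⟨C, hC⟩ := hf m hm0
  have habs : |x - y| = y - x := by rw [abs_of_nonpos (by linarith)]; ring
  -- continuity of the lower bound
  have hcont1 : Continuous (fun u : ℝ => f m + C * (u - m) + f |u - m|) := by
    apply Continuous.add
    · exact continuous_const.add (continuous_const.mul (continuous_id.sub continuous_const))
    · exact hf_cont.comp ((continuous_id.sub continuous_const).abs)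
  -- the integral inequality
  have hmono : (∫ u in x..y, (f m + C * (u - m) + f |u - m|)) ≤ ∫ u in x..y, f u := by
    apply intervalIntegral.integral_mono_on hxy.le (hcont1.intervalIntegrable x y)
      (hf_cont.intervalIntegrable x y)
    intro u hu
    exact hC u (le_trans hx hu.1)
  -- split the left integral
  have hi1 : IntervalIntegrable (fun _ : ℝ => f m) MeasureTheory.volume x y :=
    intervalIntegrable_const
  have hi2 : IntervalIntegrable (fun u : ℝ => C * (u - m)) MeasureTheory.volume x y :=
    (continuous_const.mul (continuous_id.sub continuous_const)).intervalIntegrable x y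
  have hi3 : Continuous (fun u : ℝ => f |u - m|) :=
    hf_cont.comp ((continuous_id.sub continuous_const).abs)
  have hsplit : (∫ u in x..y, (f m + C * (u - m) + f |u - m|))
      = (∫ _ in x..y, f m) + (∫ u in x..y, C * (u - m)) + (∫ u in x..y, f |u - m|) := by
    rw [intervalIntegral.integral_add (hi1.add hi2) (hi3.intervalIntegrable x y),
        intervalIntegral.integral_add hi1 hi2]
  have hconst : (∫ _ in x..y, f m) = (y - x) * f m := by
    simp [smul_eq_mul]
  have hlin : (∫ u in x..y, C * (u - m)) = 0 := by
    rw [intervalIntegral.integral_const_mul]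
    rw [intervalIntegral.integral_comp_sub_right (fun u => u) m, integral_id]
    have h : (y - m) ^ 2 = (x - m) ^ 2 := by simp only [hm]; ring
    rw [h]; ring
  -- the abs integral
  have habs1 : (∫ u in x..m, f |u - m|) = ∫ u in (0:ℝ)..((y - x)/2), f u := by
    have : (∫ u in x..m, f |u - m|) = ∫ u in x..m, f (m - u) := by
      apply intervalIntegral.integral_congr
      intro u hu
      rw [Set.uIcc_of_le hxm] at hu
      show f |u - m| = f (m - u)
      have h : |u - m| = m - u := by rw [abs_of_nonpos (by linarith [hu.2])]; ring
      rw [h]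
    rw [this, intervalIntegral.integral_comp_sub_left f m,
      show m - m = (0:ℝ) by ring, show m - x = (y - x)/2 by simp only [hm]; ring]
  have habs2 : (∫ u in m..y, f |u - m|) = ∫ u in (0:ℝ)..((y - x)/2), f u := by
    have : (∫ u in m..y, f |u - m|) = ∫ u in m..y, f (u - m) := by
      apply intervalIntegral.integral_congr
      intro u hu
      rw [Set.uIcc_of_le hmy] at hu
      show f |u - m| = f (u - m)
      rw [abs_of_nonneg (by linarith [hu.1])]
    rw [this, intervalIntegral.integral_comp_sub_right f m,
      show m - m = (0:ℝ) by ring, show y - m = (y - x)/2 by simp only [hm]; ring]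
  have habsint : (∫ u in x..y, f |u - m|) = 2 * ∫ u in (0:ℝ)..((y - x)/2), f u := by
    rw [← intervalIntegral.integral_add_adjacent_intervals
      (hi3.intervalIntegrable x m) (hi3.intervalIntegrable m y), habs1, habs2]
    ring
  -- the RHS substitution integral
  have hrhs : (∫ u in (0:ℝ)..(1/2), f (u * |x - y|))
      = (y - x)⁻¹ * ∫ u in (0:ℝ)..((y - x)/2), f u := by
    rw [habs, intervalIntegral.integral_comp_mul_right f (ne_of_gt hc),
      show (0:ℝ) * (y - x) = 0 by ring, show (1/2 : ℝ) * (y - x) = (y - x)/2 by ring,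
      smul_eq_mul]
  rw [hsplit, hconst, hlin, habsint] at hmono
  rw [hrhs]
  have h1 : (y - x) * f m ≤ (∫ u in x..y, f u) - 2 * ∫ u in (0:ℝ)..((y - x)/2), f u := by
    linarith
  have h2 : f m ≤ ((∫ u in x..y, f u) - 2 * ∫ u in (0:ℝ)..((y - x)/2), f u) / (y - x) :=
    (le_div_iff₀ hc).2 (by linarith)
  refine h2.trans_eq ?_
  field_simp
end
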